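/- arXiv:0804.1940 — 4 statements merged into one kernel-verified Lean document; each statement's English description precedes it below -/
import Mathlib

section
/- Suppose E = L ⊕ L', where L and L' are finitely generated projective A-submodules that are both isotropic for ω (i.e. ω vanishes on L × L and on L' × L'). Then there exists an isomorphism of A-modules π : S(E) → W(E) such that π(1) = 1 and π(μ_S(x)) = μ_W(x) for every x ∈ E ⊆ T(E). -/
/-!
Context: `A` a commutative ring, `lam ∈ A`, `E` an `A`-module, `ω` an alternating
`A`-bilinear form on `E`.  `T(E)` is the tensor algebra; `W(E) = T(E)/I_W` is the Weyl
algebra, realized as the `RingQuot` of the relation `x ⊗ y ~ y ⊗ x + lam·ω(x,y)`,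
with canonical projection `μ_W`; `S(E)` is the symmetric algebra, realized as the
`RingQuot` of the relation `x ⊗ y ~ y ⊗ x`, with canonical projection `μ_S`.
-/

/-- The defining relation of the Weyl algebra `W(E)`. -/
def weylRel (A : Type*) [CommRing A] {E : Type*} [AddCommGroup E] [Module A E]
    (lam : A) (ω : E →ₗ[A] E →ₗ[A] A) :
    TensorAlgebra A E → TensorAlgebra A E → Prop := fun a b =>
  ∃ x y : E, a = TensorAlgebra.ι A x * TensorAlgebra.ι A y ∧
    b = TensorAlgebra.ι A y * TensorAlgebra.ι A x +
      algebraMap A (TensorAlgebra A E) (lam * ω x y)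

/-- The defining relation of the symmetric algebra `S(E)`. -/
def symRel (A : Type*) [CommRing A] (E : Type*) [AddCommGroup E] [Module A E] :
    TensorAlgebra A E → TensorAlgebra A E → Prop := fun a b =>
  ∃ x y : E, a = TensorAlgebra.ι A x * TensorAlgebra.ι A y ∧
    b = TensorAlgebra.ι A y * TensorAlgebra.ι A x

namespace Stmt0Aux

open TensorAlgebra

variable {A : Type*} [CommRing A] {E : Type*} [AddCommGroup E] [Module A E]

section Generic

variable (rel : TensorAlgebra A E → TensorAlgebra A E → Prop)

/-- The image of a generator in the ring quotient. -/
noncomputable def gen (x : E) : RingQuot rel :=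
  RingQuot.mkAlgHom A rel (TensorAlgebra.ι A x)

theorem genInduction {C : RingQuot rel → Prop}
    (h1 : C 1) (hadd : ∀ a b, C a → C b → C (a + b))
    (hsmul : ∀ (r : A) a, C a → C (r • a))
    (hmul : ∀ (x : E) a, C a → C (gen rel x * a)) : ∀ w, C w := by
  intro w
  obtain ⟨t, rfl⟩ := RingQuot.mkAlgHom_surjective A rel w
  have key : ∀ t : TensorAlgebra A E, ∀ a, C a → C (RingQuot.mkAlgHom A rel t * a) := by
    intro t
    induction t using TensorAlgebra.induction with
    | algebraMap r =>
      intro a ha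
      rw [AlgHom.commutes, ← Algebra.smul_def]
      exact hsmul r a ha
    | ι x => exact fun a => hmul x a
    | mul p q hp hq =>
      intro a ha
      rw [map_mul, mul_assoc]
      exact hp _ (hq a ha)
    | add p q hp hq =>
      intro a ha
      rw [map_add, add_mul]
      exact hadd _ _ (hp a ha) (hq a ha)
  simpa using key t 1 h1

variable (κ : E →ₗ[A] E →ₗ[A] A)

/-- The shape hypothesis on the relation. -/
def Shaped : Prop :=
  ∀ ⦃a b⦄, rel a b → ∃ x y : E, a = TensorAlgebra.ι A x * TensorAlgebra.ι A y ∧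
    b = TensorAlgebra.ι A y * TensorAlgebra.ι A x + algebraMap A _ (κ x y)

/-- Saturation: the relation contains all the generating pairs. -/
def Sat : Prop :=
  ∀ x y : E, rel (TensorAlgebra.ι A x * TensorAlgebra.ι A y)
    (TensorAlgebra.ι A y * TensorAlgebra.ι A x + algebraMap A _ (κ x y))

variable {rel κ}

theorem gen_mul_gen (hsat : Sat rel κ) (x y : E) :
    gen rel x * gen rel y = gen rel y * gen rel x + algebraMap A (RingQuot rel) (κ x y) := by
  have := RingQuot.mkAlgHom_rel A (hsat x y)
  simpa [gen, map_mul, map_add] using this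

section Deriv

variable (rel) in
/-- The linear map into the trivial square-zero extension used to construct the derivation. -/
noncomputable def dFun (φ : E →ₗ[A] A) :
    E →ₗ[A] TrivSqZeroExt (RingQuot rel) (RingQuot rel) where
  toFun y := TrivSqZeroExt.inl (gen rel y) + TrivSqZeroExt.inr (algebraMap A _ (φ y))
  map_add' a b := by
    rw [show gen rel (a + b) = gen rel a + gen rel b by simp [gen, map_add],
      map_add φ, map_add (algebraMap A (RingQuot rel)), TrivSqZeroExt.inl_add,
      TrivSqZeroExt.inr_add]
    abel
  map_smul' r a := by
    rw [show gen rel (r • a) = r • gen rel a by simp [gen, map_smul],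
      map_smul φ, smul_eq_mul, map_mul, ← Algebra.smul_def,
      RingHom.id_apply, smul_add, TrivSqZeroExt.inl_smul, TrivSqZeroExt.inr_smul]

@[simp] theorem fst_dFun (φ : E →ₗ[A] A) (y : E) :
    (dFun rel φ y).fst = gen rel y := by simp [dFun]

@[simp] theorem snd_dFun (φ : E →ₗ[A] A) (y : E) :
    (dFun rel φ y).snd = algebraMap A (RingQuot rel) (φ y) := by
  simp [dFun, Algebra.algebraMap_eq_smul_one]

theorem fst_dLift (φ : E →ₗ[A] A) (t : TensorAlgebra A E) :
    (TensorAlgebra.lift A (dFun rel φ) t).fst = RingQuot.mkAlgHom A rel t := by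
  have : (TrivSqZeroExt.fstHom A (RingQuot rel) (RingQuot rel)).comp
      (TensorAlgebra.lift A (dFun rel φ)) = RingQuot.mkAlgHom A rel := by
    apply TensorAlgebra.hom_ext
    ext z
    simp [gen]
  calc (TensorAlgebra.lift A (dFun rel φ) t).fst
      = ((TrivSqZeroExt.fstHom A (RingQuot rel) (RingQuot rel)).comp
          (TensorAlgebra.lift A (dFun rel φ))) t := rfl
    _ = RingQuot.mkAlgHom A rel t := by rw [this]

theorem dLift_rel (hsh : Shaped rel κ) (φ : E →ₗ[A] A) :
    ∀ ⦃a b⦄, rel a b →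
      TensorAlgebra.lift A (dFun rel φ) a = TensorAlgebra.lift A (dFun rel φ) b := by
  intro a b hab
  obtain ⟨x, y, ha, hb⟩ := hsh hab
  apply TrivSqZeroExt.ext
  · rw [fst_dLift, fst_dLift]
    exact RingQuot.mkAlgHom_rel A hab
  · subst ha hb
    rw [map_mul, map_add, map_mul, AlgHom.commutes, TensorAlgebra.lift_ι_apply,
      TensorAlgebra.lift_ι_apply, TrivSqZeroExt.snd_add, TrivSqZeroExt.snd_mul,
      TrivSqZeroExt.snd_mul, TrivSqZeroExt.algebraMap_eq_inl', TrivSqZeroExt.snd_inl]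
    simp only [fst_dFun, snd_dFun, smul_eq_mul, op_smul_eq_mul]
    rw [add_zero, Algebra.commutes (φ y), Algebra.commutes (φ x)]
    exact add_comm (gen rel x * algebraMap A (RingQuot rel) (φ y))
      (gen rel y * algebraMap A (RingQuot rel) (φ x))

variable (rel) in
/-- The algebra morphism `Q → Q ⊕ Q·ε` encoding the contraction derivation. -/
noncomputable def dAlgHom (hsh : Shaped rel κ) (φ : E →ₗ[A] A) :
    RingQuot rel →ₐ[A] TrivSqZeroExt (RingQuot rel) (RingQuot rel) :=
  RingQuot.liftAlgHom A ⟨TensorAlgebra.lift A (dFun rel φ), dLift_rel hsh φ⟩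

theorem fst_dAlgHom (hsh : Shaped rel κ) (φ : E →ₗ[A] A) (w : RingQuot rel) :
    (dAlgHom rel hsh φ w).fst = w := by
  obtain ⟨t, rfl⟩ := RingQuot.mkAlgHom_surjective A rel w
  rw [dAlgHom, RingQuot.liftAlgHom_mkAlgHom_apply, fst_dLift]

variable (rel) in
/-- The contraction derivation associated to a linear functional `φ`. -/
noncomputable def Dop (hsh : Shaped rel κ) (φ : E →ₗ[A] A) :
    RingQuot rel →ₗ[A] RingQuot rel where
  toFun w := (dAlgHom rel hsh φ w).snd
  map_add' a b := by rw [map_add, TrivSqZeroExt.snd_add]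
  map_smul' r a := by rw [map_smul, TrivSqZeroExt.snd_smul, RingHom.id_apply]

theorem Dop_gen (hsh : Shaped rel κ) (φ : E →ₗ[A] A) (x : E) :
    Dop rel hsh φ (gen rel x) = algebraMap A (RingQuot rel) (φ x) := by
  show (dAlgHom rel hsh φ (RingQuot.mkAlgHom A rel (TensorAlgebra.ι A x))).snd = _
  rw [dAlgHom, RingQuot.liftAlgHom_mkAlgHom_apply, TensorAlgebra.lift_ι_apply, snd_dFun]

theorem Dop_mul (hsh : Shaped rel κ) (φ : E →ₗ[A] A) (a b : RingQuot rel) :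
    Dop rel hsh φ (a * b) = a * Dop rel hsh φ b + Dop rel hsh φ a * b := by
  show (dAlgHom rel hsh φ (a * b)).snd = _
  rw [map_mul, TrivSqZeroExt.snd_mul, fst_dAlgHom, fst_dAlgHom, smul_eq_mul, op_smul_eq_mul]
  rfl

theorem Dop_one (hsh : Shaped rel κ) (φ : E →ₗ[A] A) :
    Dop rel hsh φ (1 : RingQuot rel) = 0 := by
  show (dAlgHom rel hsh φ 1).snd = 0
  rw [map_one, TrivSqZeroExt.snd_one]

theorem Dop_algebraMap (hsh : Shaped rel κ) (φ : E →ₗ[A] A) (r : A) :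
    Dop rel hsh φ (algebraMap A (RingQuot rel) r) = 0 := by
  rw [Algebra.algebraMap_eq_smul_one, map_smul, Dop_one, smul_zero]

theorem Dop_gen_mul (hsh : Shaped rel κ) (φ : E →ₗ[A] A) (x : E) (a : RingQuot rel) :
    Dop rel hsh φ (gen rel x * a) = gen rel x * Dop rel hsh φ a + φ x • a := by
  rw [Dop_mul, Dop_gen, ← Algebra.smul_def]

theorem Dop_add_form (hsh : Shaped rel κ) (φ ψ : E →ₗ[A] A) (w : RingQuot rel) :
    Dop rel hsh (φ + ψ) w = Dop rel hsh φ w + Dop rel hsh ψ w := by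
  induction w using genInduction with
  | h1 => rw [Dop_one, Dop_one, Dop_one, add_zero]
  | hadd a b ha hb =>
    rw [map_add, map_add, map_add, ha, hb]
    abel
  | hsmul r a ha => rw [map_smul, map_smul, map_smul, ha, smul_add]
  | hmul x a ha =>
    rw [Dop_gen_mul, Dop_gen_mul, Dop_gen_mul, ha, LinearMap.add_apply, add_smul, mul_add]
    abel

theorem Dop_smul_form (hsh : Shaped rel κ) (r : A) (φ : E →ₗ[A] A) (w : RingQuot rel) :
    Dop rel hsh (r • φ) w = r • Dop rel hsh φ w := by
  induction w using genInduction with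
  | h1 => rw [Dop_one, Dop_one, smul_zero]
  | hadd a b ha hb => rw [map_add, map_add, ha, hb, smul_add]
  | hsmul s a ha => rw [map_smul, map_smul, ha, smul_comm]
  | hmul x a ha =>
    rw [Dop_gen_mul, Dop_gen_mul, ha, LinearMap.smul_apply, smul_add, smul_eq_mul,
      mul_smul, mul_smul_comm]

theorem Dop_zero_form (hsh : Shaped rel κ) (w : RingQuot rel) :
    Dop rel hsh (0 : E →ₗ[A] A) w = 0 := by
  have := Dop_smul_form hsh (0 : A) (0 : E →ₗ[A] A) w
  simpa using this

theorem Dop_comm (hsh : Shaped rel κ) (φ ψ : E →ₗ[A] A) (w : RingQuot rel) :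
    Dop rel hsh φ (Dop rel hsh ψ w) = Dop rel hsh ψ (Dop rel hsh φ w) := by
  induction w using genInduction with
  | h1 => rw [Dop_one, Dop_one, map_zero, map_zero]
  | hadd a b ha hb => rw [map_add, map_add, map_add, map_add, ha, hb]
  | hsmul r a ha => rw [map_smul, map_smul, map_smul, map_smul, ha]
  | hmul x a ha =>
    rw [Dop_gen_mul, Dop_gen_mul, map_add, map_add, Dop_gen_mul, Dop_gen_mul,
      map_smul, map_smul, ha]
    abel

end Deriv

end Generic

section Rep

variable {rel₁ rel₂ : TensorAlgebra A E → TensorAlgebra A E → Prop}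
variable {κ₁ κ₂ : E →ₗ[A] E →ₗ[A] A}
/-- The action of a generator on the target algebra. -/
noncomputable def opLin (hsh₂ : Shaped rel₂ κ₂) (c : E →ₗ[A] E →ₗ[A] A) :
    E →ₗ[A] Module.End A (RingQuot rel₂) where
  toFun x := LinearMap.mulLeft A (gen rel₂ x) + Dop rel₂ hsh₂ (c x)
  map_add' x y := by
    ext w
    have hg : gen rel₂ (x + y) = gen rel₂ x + gen rel₂ y := by simp [gen, map_add]
    simp only [LinearMap.add_apply, LinearMap.mulLeft_apply, hg, map_add,
      Dop_add_form, add_mul]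
    abel
  map_smul' r x := by
    ext w
    have hg : gen rel₂ (r • x) = r • gen rel₂ x := by simp [gen, map_smul]
    simp only [LinearMap.add_apply, LinearMap.mulLeft_apply, hg, map_smul,
      Dop_smul_form, RingHom.id_apply, LinearMap.smul_apply, smul_mul_assoc, smul_add]

theorem opLin_apply (x : E) (w : RingQuot rel₂) :
    opLin hsh₂ c x w = gen rel₂ x * w + Dop rel₂ hsh₂ (c x) w := rfl

theorem op_rel (hsh₂ : Shaped rel₂ κ₂) (hsat₂ : Sat rel₂ κ₂) (c : E →ₗ[A] E →ₗ[A] A)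
    (hcond : ∀ x y, κ₂ x y + c x y - c y x = κ₁ x y) (x y : E) :
    opLin hsh₂ c x * opLin hsh₂ c y =
      opLin hsh₂ c y * opLin hsh₂ c x +
        algebraMap A (Module.End A (RingQuot rel₂)) (κ₁ x y) := by
  ext w
  simp only [Module.End.mul_apply, LinearMap.add_apply, opLin_apply,
    Module.algebraMap_end_apply, map_add, mul_add, Dop_gen_mul]
  rw [← mul_assoc, ← mul_assoc, gen_mul_gen hsat₂ x y, add_mul]
  simp only [← Algebra.smul_def]
  rw [Dop_comm hsh₂ (c x) (c y) w, ← hcond x y, sub_smul, add_smul]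
  abel
variable (rel₁) in
/-- The representation of `Q₁` on `Q₂`. -/
noncomputable def repHom (hsh₁ : Shaped rel₁ κ₁) (hsh₂ : Shaped rel₂ κ₂)
    (hsat₂ : Sat rel₂ κ₂) (c : E →ₗ[A] E →ₗ[A] A)
    (hcond : ∀ x y, κ₂ x y + c x y - c y x = κ₁ x y) :
    RingQuot rel₁ →ₐ[A] Module.End A (RingQuot rel₂) :=
  RingQuot.liftAlgHom A ⟨TensorAlgebra.lift A (opLin hsh₂ c), by
    intro a b hab
    obtain ⟨x, y, rfl, rfl⟩ := hsh₁ hab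
    rw [map_mul, map_add, map_mul, AlgHom.commutes]
    simp only [TensorAlgebra.lift_ι_apply]
    exact op_rel hsh₂ hsat₂ c hcond x y⟩

variable (rel₁) in
/-- Evaluation of the representation at `1`. -/
noncomputable def phiMap (hsh₁ : Shaped rel₁ κ₁) (hsh₂ : Shaped rel₂ κ₂)
    (hsat₂ : Sat rel₂ κ₂) (c : E →ₗ[A] E →ₗ[A] A)
    (hcond : ∀ x y, κ₂ x y + c x y - c y x = κ₁ x y) :
    RingQuot rel₁ →ₗ[A] RingQuot rel₂ where
  toFun w := repHom rel₁ hsh₁ hsh₂ hsat₂ c hcond w 1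
  map_add' a b := by rw [map_add, LinearMap.add_apply]
  map_smul' r a := by rw [map_smul, LinearMap.smul_apply, RingHom.id_apply]

section PhiLemmas

variable {hsh₁ : Shaped rel₁ κ₁} {hsh₂ : Shaped rel₂ κ₂}
variable {hsat₂ : Sat rel₂ κ₂} {c : E →ₗ[A] E →ₗ[A] A}
variable {hcond : ∀ x y, κ₂ x y + c x y - c y x = κ₁ x y}

theorem phiMap_one : phiMap rel₁ hsh₁ hsh₂ hsat₂ c hcond 1 = 1 := by
  show repHom rel₁ hsh₁ hsh₂ hsat₂ c hcond 1 1 = 1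
  rw [map_one (repHom rel₁ hsh₁ hsh₂ hsat₂ c hcond)]
  rfl

theorem phiMap_gen_mul (x : E) (w : RingQuot rel₁) :
    phiMap rel₁ hsh₁ hsh₂ hsat₂ c hcond (gen rel₁ x * w) =
      gen rel₂ x * phiMap rel₁ hsh₁ hsh₂ hsat₂ c hcond w +
        Dop rel₂ hsh₂ (c x) (phiMap rel₁ hsh₁ hsh₂ hsat₂ c hcond w) := by
  show repHom rel₁ hsh₁ hsh₂ hsat₂ c hcond (gen rel₁ x * w) 1 = _
  have hx : repHom rel₁ hsh₁ hsh₂ hsat₂ c hcond (gen rel₁ x) = opLin hsh₂ c x := by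
    rw [gen, repHom, RingQuot.liftAlgHom_mkAlgHom_apply, TensorAlgebra.lift_ι_apply]
  rw [map_mul, Module.End.mul_apply, hx, opLin_apply]
  rfl

theorem phiMap_gen (x : E) :
    phiMap rel₁ hsh₁ hsh₂ hsat₂ c hcond (gen rel₁ x) = gen rel₂ x := by
  have h := phiMap_gen_mul (hsh₁ := hsh₁) (hsh₂ := hsh₂) (hsat₂ := hsat₂) (c := c)
    (hcond := hcond) x 1
  rw [mul_one, phiMap_one, mul_one, Dop_one, add_zero] at h
  exact h

theorem phiMap_Dop (ψ : E →ₗ[A] A) (w : RingQuot rel₁) :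
    phiMap rel₁ hsh₁ hsh₂ hsat₂ c hcond (Dop rel₁ hsh₁ ψ w) =
      Dop rel₂ hsh₂ ψ (phiMap rel₁ hsh₁ hsh₂ hsat₂ c hcond w) := by
  induction w using genInduction with
  | h1 => rw [Dop_one, map_zero, phiMap_one, Dop_one]
  | hadd a b ha hb => rw [map_add, map_add, ha, hb, map_add, map_add]
  | hsmul r a ha => rw [map_smul, map_smul, ha, map_smul, map_smul]
  | hmul x a ha =>
    rw [Dop_gen_mul, map_add, map_smul, phiMap_gen_mul, ha, phiMap_gen_mul,
      map_add, Dop_gen_mul, Dop_comm hsh₂ ψ (c x)]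
    abel

end PhiLemmas

section RoundTrip

variable {hsh₁ : Shaped rel₁ κ₁} {hsh₂ : Shaped rel₂ κ₂}
variable {hsat₁ : Sat rel₁ κ₁} {hsat₂ : Sat rel₂ κ₂} {c c' : E →ₗ[A] E →ₗ[A] A}
variable {hcond : ∀ x y, κ₂ x y + c x y - c y x = κ₁ x y}
variable {hcond' : ∀ x y, κ₁ x y + c' x y - c' y x = κ₂ x y}

theorem psi_phi (hneg : c' = -c) (w : RingQuot rel₁) :
    phiMap rel₂ hsh₂ hsh₁ hsat₁ c' hcond'
      (phiMap rel₁ hsh₁ hsh₂ hsat₂ c hcond w) = w := by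
  induction w using genInduction with
  | h1 => rw [phiMap_one, phiMap_one]
  | hadd a b ha hb => rw [map_add, map_add, ha, hb]
  | hsmul r a ha => rw [map_smul, map_smul, ha]
  | hmul x a ha =>
    rw [phiMap_gen_mul, map_add, phiMap_gen_mul, phiMap_Dop, ha, add_assoc]
    have : Dop rel₁ hsh₁ (c' x)
          (phiMap rel₂ hsh₂ hsh₁ hsat₁ c' hcond'
            (phiMap rel₁ hsh₁ hsh₂ hsat₂ c hcond a)) +
        Dop rel₁ hsh₁ (c x)
          (phiMap rel₂ hsh₂ hsh₁ hsat₁ c' hcond'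
            (phiMap rel₁ hsh₁ hsh₂ hsat₂ c hcond a)) = 0 := by
      rw [← Dop_add_form]
      have hz : c' x + c x = 0 := by rw [hneg]; simp
      rw [hz, Dop_zero_form]
    rw [ha] at this
    rw [this, add_zero]

end RoundTrip

end Rep

end Stmt0Aux

open Stmt0Aux

/-- If `E = L ⊕ L'` with `L, L'` finitely generated projective
isotropic submodules, then there is an `A`-module isomorphism `π : S(E) ≅ W(E)` with
`π 1 = 1` and `π (μ_S x) = μ_W x` for `x ∈ E`. -/
theorem stmt0 (A : Type*) [CommRing A] (E : Type*) [AddCommGroup E] [Module A E]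
    (lam : A) (ω : E →ₗ[A] E →ₗ[A] A) (halt : ∀ x : E, ω x x = 0)
    (L L' : Submodule A E) (hcompl : IsCompl L L')
    (hLfin : Module.Finite A L) (hLproj : Module.Projective A L)
    (hL'fin : Module.Finite A L') (hL'proj : Module.Projective A L')
    (hLiso : ∀ x ∈ L, ∀ y ∈ L, ω x y = 0)
    (hL'iso : ∀ x ∈ L', ∀ y ∈ L', ω x y = 0) :
    ∃ π : RingQuot (symRel A E) ≃ₗ[A] RingQuot (weylRel A lam ω),
      π 1 = 1 ∧
      ∀ x : E,
        π (RingQuot.mkAlgHom A (symRel A E) (TensorAlgebra.ι A x)) =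
          RingQuot.mkAlgHom A (weylRel A lam ω) (TensorAlgebra.ι A x) := by
  classical
  set p := Submodule.linearProjOfIsCompl L L' hcompl with hp
  set q := Submodule.linearProjOfIsCompl L' L hcompl.symm with hq
  set β : E →ₗ[A] E →ₗ[A] A :=
    ω.compl₁₂ (L.subtype ∘ₗ p) (L'.subtype ∘ₗ q) with hβdef
  have hβ : ∀ x y : E, β x y - β y x = ω x y := by
    intro x y
    have hanti : ∀ u v : E, ω u v = - ω v u := by
      intro u v
      have h := halt (u + v)
      simp only [map_add, LinearMap.add_apply, halt, zero_add, add_zero] at h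
      exact eq_neg_of_add_eq_zero_right h
    have hx := Submodule.projection_add_projection_eq_self hcompl x
    have hy := Submodule.projection_add_projection_eq_self hcompl y
    have e1 : ω x y = ω (↑(p x)) (↑(q y)) + ω (↑(q x)) (↑(p y)) := by
      have hx' : (↑(p x) : E) + ↑(q x) = x := hx
      have hy' : (↑(p y) : E) + ↑(q y) = y := hy
      conv_lhs => rw [← hx', ← hy']
      simp only [map_add, LinearMap.add_apply]
      rw [hLiso _ (SetLike.coe_mem _) _ (SetLike.coe_mem _),
        hL'iso _ (SetLike.coe_mem _) _ (SetLike.coe_mem _)]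
      abel
    have e2 : β y x = - ω (↑(q x)) (↑(p y)) := by
      show ω (↑(p y)) (↑(q x)) = _
      exact hanti _ _
    have e3 : β x y = ω (↑(p x)) (↑(q y)) := rfl
    rw [e2, e3, sub_neg_eq_add, e1]
  set kW : E →ₗ[A] E →ₗ[A] A := lam • ω with hkW
  set c : E →ₗ[A] E →ₗ[A] A := lam • β with hc
  have hkW_apply : ∀ x y : E, kW x y = lam * ω x y := by
    intro x y; rw [hkW]; simp [LinearMap.smul_apply, smul_eq_mul]
  have hc_apply : ∀ x y : E, c x y = lam * β x y := by
    intro x y; rw [hc]; simp [LinearMap.smul_apply, smul_eq_mul]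
  have hshW : Shaped (weylRel A lam ω) kW := by
    rintro a b ⟨x, y, ha, hb⟩
    exact ⟨x, y, ha, by rw [hb, hkW_apply]⟩
  have hsatW : Sat (weylRel A lam ω) kW := by
    intro x y
    exact ⟨x, y, rfl, by rw [hkW_apply]⟩
  have hshS : Shaped (symRel A E) (0 : E →ₗ[A] E →ₗ[A] A) := by
    rintro a b ⟨x, y, ha, hb⟩
    refine ⟨x, y, ha, ?_⟩
    rw [hb]
    simp
  have hsatS : Sat (symRel A E) (0 : E →ₗ[A] E →ₗ[A] A) := by
    intro x y
    exact ⟨x, y, rfl, by simp⟩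
  have hcond : ∀ x y : E,
      (0 : E →ₗ[A] E →ₗ[A] A) x y + c x y - c y x = kW x y := by
    intro x y
    rw [hkW_apply, hc_apply, hc_apply]
    simp only [LinearMap.zero_apply, zero_add]
    rw [← mul_sub, hβ]
  have hcond' : ∀ x y : E,
      kW x y + (-c) x y - (-c) y x = (0 : E →ₗ[A] E →ₗ[A] A) x y := by
    intro x y
    have := hcond x y
    simp only [LinearMap.zero_apply, zero_add] at this ⊢
    simp only [LinearMap.neg_apply]
    rw [← this]
    ring
  set Φ := phiMap (weylRel A lam ω) hshW hshS hsatS c hcond with hΦ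
  set Ψ := phiMap (symRel A E) hshS hshW hsatW (-c) hcond' with hΨ
  have h1 : Ψ.comp Φ = LinearMap.id := by
    apply LinearMap.ext
    intro w
    exact psi_phi rfl w
  have h2 : Φ.comp Ψ = LinearMap.id := by
    apply LinearMap.ext
    intro w
    exact psi_phi (neg_neg c).symm w
  refine ⟨LinearEquiv.ofLinear Ψ Φ h1 h2, ?_, ?_⟩
  · show Ψ 1 = 1
    exact phiMap_one
  · intro x
    show Ψ (gen (symRel A E) x) = gen (weylRel A lam ω) x
    exact phiMap_gen x
end

section
/- The restrictions of μ_S and of μ_W to S̃(E) are A-module isomorphisms of S̃(E) onto S(E) and onto W(E) respectively; consequently the family {μ_S(e_I) : I a nonincreasing sequence} is an A-basis of S(E) and the family {μ_W(e_I) : I a nonincreasing sequence} is an A-basis of W(E). -/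
/-- `e_I = e_{i₁} ⊗ ⋯ ⊗ e_{i_p} ∈ T(E)` for a list of indices `I` (with `e_∅ = 1`). -/
noncomputable def eTensor {A : Type*} [CommRing A] {E : Type*} [AddCommGroup E] [Module A E]
    {n : ℕ} (e : Module.Basis (Fin n) A E) (I : List (Fin n)) : TensorAlgebra A E :=
  (I.map fun i => TensorAlgebra.ι A (e i)).prod

/-- `S̃(E)`: the `A`-submodule of `T(E)` spanned by the tensors `e_I` over all
nonincreasing sequences `I`. -/
def stilde {A : Type*} [CommRing A] {E : Type*} [AddCommGroup E] [Module A E]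
    {n : ℕ} (e : Module.Basis (Fin n) A E) : Submodule A (TensorAlgebra A E) :=
  Submodule.span A {t | ∃ I : List (Fin n), List.Pairwise (· ≥ ·) I ∧ t = eTensor e I}



section PBWAux

variable {A : Type*} [CommRing A] {E : Type*} [AddCommGroup E] [Module A E] {n : ℕ}

lemma eTensor_nil (e : Module.Basis (Fin n) A E) : eTensor e [] = 1 := rfl

lemma eTensor_cons (e : Module.Basis (Fin n) A E) (i : Fin n) (L : List (Fin n)) :
    eTensor e (i :: L) = TensorAlgebra.ι A (e i) * eTensor e L := by
  simp [eTensor]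

lemma eTensor_append (e : Module.Basis (Fin n) A E) (L₁ L₂ : List (Fin n)) :
    eTensor e (L₁ ++ L₂) = eTensor e L₁ * eTensor e L₂ := by
  simp [eTensor]

/-- the exponent multiset of a list -/
noncomputable def cnt (L : List (Fin n)) : Fin n →₀ ℕ := Multiset.toFinsupp (↑L)

lemma cnt_nil : cnt ([] : List (Fin n)) = 0 := rfl

lemma cnt_cons (i : Fin n) (L : List (Fin n)) :
    cnt (i :: L) = Finsupp.single i 1 + cnt L := by
  unfold cnt
  rw [show ((i :: L : List (Fin n)) : Multiset (Fin n)) = {i} + (L : Multiset (Fin n)) by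
    simp, map_add, Multiset.toFinsupp_singleton]

lemma cnt_sum (L : List (Fin n)) : (cnt L).sum (fun _ k => k) = L.length := by
  unfold cnt
  have h := Multiset.toFinsupp_sum_eq (↑L : Multiset (Fin n))
  rw [Multiset.coe_card] at h
  exact h

lemma cnt_injective {L₁ L₂ : List (Fin n)} (h₁ : L₁.Pairwise (· ≥ ·)) (h₂ : L₂.Pairwise (· ≥ ·))
    (h : cnt L₁ = cnt L₂) : L₁ = L₂ := by
  haveI : Std.Antisymm (α := Fin n) (· ≥ ·) := ⟨fun a b hab hba => le_antisymm hba hab⟩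
  have hm : (L₁ : Multiset (Fin n)) = (L₂ : Multiset (Fin n)) :=
    Multiset.toFinsupp.injective h
  exact List.Perm.eq_of_pairwise' h₁ h₂ (Multiset.coe_eq_coe.mp hm)

/-- find an adjacent ascent in a non-sorted list -/
lemma exists_ascent {L : List (Fin n)} (h : ¬ L.Pairwise (· ≥ ·)) :
    ∃ (U : List (Fin n)) (a b : Fin n) (V : List (Fin n)), L = U ++ a :: b :: V ∧ a < b := by
  induction L with
  | nil => exact absurd List.Pairwise.nil h
  | cons x T ih =>
    match T, ih with
    | [], _ => exact absurd (List.pairwise_singleton _ x) h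
    | y :: T', ih =>
      by_cases hs : (y :: T').Pairwise (· ≥ ·)
      · refine ⟨[], x, y, T', rfl, ?_⟩
        by_contra hxy
        push_neg at hxy
        apply h
        rw [List.pairwise_cons]
        refine ⟨fun b hb => ?_, hs⟩
        rcases List.mem_cons.mp hb with hb | hb
        · exact hb ▸ hxy
        · exact le_trans ((List.pairwise_cons.mp hs).1 b hb) hxy
      · obtain ⟨U, a, b, V, hUV, hab⟩ := ih hs
        exact ⟨x :: U, a, b, V, by rw [hUV]; rfl, hab⟩

/-- numeric value of a list, head most significant, base `b` -/
def lval (b : ℕ) : List (Fin n) → ℕ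
  | [] => 0
  | a :: L => a.val * b ^ L.length + lval b L

lemma lval_append (b : ℕ) (X Y : List (Fin n)) :
    lval b (X ++ Y) = lval b X * b ^ Y.length + lval b Y := by
  induction X with
  | nil => simp [lval]
  | cons a X ih => simp [lval, ih, List.length_append, pow_add]; ring

lemma lval_lt (b : ℕ) (hb : n ≤ b) (L : List (Fin n)) : lval b L < b ^ L.length := by
  induction L with
  | nil => simp [lval]
  | cons a L ih =>
    have ha : a.val + 1 ≤ b := Nat.lt_of_lt_of_le a.isLt hb
    calc lval b (a :: L) = a.val * b ^ L.length + lval b L := rfl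
      _ < a.val * b ^ L.length + b ^ L.length := by omega
      _ = (a.val + 1) * b ^ L.length := by ring
      _ ≤ b * b ^ L.length := Nat.mul_le_mul_right _ ha
      _ = b ^ (a :: L).length := by rw [List.length_cons]; ring

/-- the well-founded measure for straightening -/
def mea : List (Fin n) → ℕ :=
  fun L => (n+2) ^ (L.length + 1) + ((n+2) ^ L.length - lval (n+2) L)

lemma mea_swap {U V : List (Fin n)} {a b : Fin n} (hab : a < b) :
    mea (U ++ b :: a :: V) < mea (U ++ a :: b :: V) := by
  have hlen : (U ++ b :: a :: V).length = (U ++ a :: b :: V).length := by simp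
  have hB : (2:ℕ) ≤ n + 2 := by omega
  have hv : lval (n+2) (U ++ a :: b :: V) < lval (n+2) (U ++ b :: a :: V) := by
    rw [lval_append, lval_append]
    have : lval (n+2) (a :: b :: V) < lval (n+2) (b :: a :: V) := by
      show a.val * (n+2) ^ (b :: V).length + (b.val * (n+2) ^ V.length + lval (n+2) V)
        < b.val * (n+2) ^ (a :: V).length + (a.val * (n+2) ^ V.length + lval (n+2) V)
      have hpow : (n+2) ^ (b :: V).length = (n+2) * (n+2) ^ V.length := by
        rw [List.length_cons]; ring
      have hpow' : (n+2) ^ (a :: V).length = (n+2) * (n+2) ^ V.length := by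
        rw [List.length_cons]; ring
      rw [hpow, hpow']
      have hab' : a.val < b.val := hab
      have hp : 0 < (n+2) ^ V.length := Nat.pow_pos (by omega)
      obtain ⟨k, hk⟩ : ∃ k, b.val = a.val + k + 1 := ⟨b.val - a.val - 1, by omega⟩
      rw [hk]
      set P := (n+2) ^ V.length
      have h2P : P ≤ (n+2) * P := by nlinarith
      nlinarith
    have hlen2 : (a :: b :: V).length = (b :: a :: V).length := by simp
    rw [hlen2]
    omega
  have hlt : lval (n+2) (U ++ a :: b :: V) < (n+2) ^ (U ++ a :: b :: V).length :=
    lval_lt _ (by omega) _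
  unfold mea
  rw [hlen]
  have := Nat.sub_lt_sub_left hlt hv
  omega

lemma mea_drop (U V : List (Fin n)) (a b : Fin n) :
    mea (U ++ V) < mea (U ++ a :: b :: V) := by
  have hB : (2:ℕ) ≤ n + 2 := by omega
  have h1 : (U ++ a :: b :: V).length = (U ++ V).length + 2 := by simp; omega
  unfold mea
  rw [h1]
  set l := (U ++ V).length
  have h2 : lval (n+2) (U ++ V) < (n+2) ^ l := lval_lt _ (by omega) _
  have h3 : (n+2) ^ (l+1) + (n+2) ^ l < (n+2) ^ (l + 2 + 1) := by
    have heq : (n+2) ^ (l+2+1) = (n+2)^l * (n+2)^3 := by ring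
    have h4 : (n+2) ^ (l+1) = (n+2)^l * (n+2) := by ring
    have h5 : (0:ℕ) < (n+2)^l := Nat.pow_pos (by omega)
    have h6 : (n+2) + 1 < (n+2)^3 := by
      have : (n+2)^3 = (n+2)*(n+2)*(n+2) := by ring
      nlinarith
    calc (n+2) ^ (l+1) + (n+2) ^ l = (n+2)^l * ((n+2) + 1) := by rw [h4]; ring
      _ < (n+2)^l * (n+2)^3 := (Nat.mul_lt_mul_left h5).mpr h6
      _ = (n+2) ^ (l + 2 + 1) := heq.symm
  omega

end PBWAux

section PBWAux2

variable {A : Type*} [CommRing A] {E : Type*} [AddCommGroup E] [Module A E] {n : ℕ}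

lemma span_eTensor_top (e : Module.Basis (Fin n) A E) :
    Submodule.span A (Set.range fun L : List (Fin n) => eTensor e L) = ⊤ := by
  rw [eq_top_iff]
  rintro t -
  set S : Submodule A (TensorAlgebra A E) :=
    Submodule.span A (Set.range fun L : List (Fin n) => eTensor e L) with hS
  have hmem : ∀ L : List (Fin n), eTensor e L ∈ S :=
    fun L => Submodule.subset_span ⟨L, rfl⟩
  induction t using TensorAlgebra.induction with
  | algebraMap r =>
    have : (algebraMap A (TensorAlgebra A E)) r = r • eTensor e [] := by
      rw [eTensor_nil, Algebra.algebraMap_eq_smul_one]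
    rw [this]
    exact S.smul_mem _ (hmem [])
  | ι x =>
    have hx : TensorAlgebra.ι A x = ∑ i, e.repr x i • eTensor e [i] := by
      calc TensorAlgebra.ι A x = TensorAlgebra.ι A (∑ i, e.repr x i • e i) := by
            rw [e.sum_repr x]
        _ = ∑ i, e.repr x i • TensorAlgebra.ι A (e i) := by
            rw [map_sum]; simp
        _ = ∑ i, e.repr x i • eTensor e [i] := by
            simp [eTensor]
    rw [hx]
    exact S.sum_mem fun i _ => S.smul_mem _ (hmem [i])
  | mul a b ha hb =>
    refine Submodule.span_induction₂ (p := fun x y _ _ => x * y ∈ S) ?_ ?_ ?_ ?_ ?_ ?_ ?_ ha hb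
    · rintro _ _ ⟨L₁, rfl⟩ ⟨L₂, rfl⟩
      rw [← eTensor_append]
      exact hmem _
    · intro y _; rw [zero_mul]; exact S.zero_mem
    · intro x _; rw [mul_zero]; exact S.zero_mem
    · intro x y z _ _ _ h1 h2; rw [add_mul]; exact S.add_mem h1 h2
    · intro x y z _ _ _ h1 h2; rw [mul_add]; exact S.add_mem h1 h2
    · intro r x y _ _ h; rw [smul_mul_assoc]; exact S.smul_mem _ h
    · intro r x y _ _ h; rw [mul_smul_comm]; exact S.smul_mem _ h
  | add a b ha hb => exact S.add_mem ha hb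

variable {B : Type*} [Ring B] [Algebra A B]

lemma straighten (e : Module.Basis (Fin n) A E) (f : TensorAlgebra A E →ₐ[A] B) (c : E → E → A)
    (hswap : ∀ x y : E, f (TensorAlgebra.ι A x * TensorAlgebra.ι A y)
      = f (TensorAlgebra.ι A y * TensorAlgebra.ι A x) + algebraMap A B (c x y))
    (L : List (Fin n)) :
    f (eTensor e L) ∈ Submodule.span A
      (Set.range fun I : {I : List (Fin n) // I.Pairwise (· ≥ ·)} => f (eTensor e I.1)) := by
  set P := Submodule.span A
      (Set.range fun I : {I : List (Fin n) // I.Pairwise (· ≥ ·)} => f (eTensor e I.1)) with hP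
  suffices H : ∀ N (L : List (Fin n)), mea L ≤ N → f (eTensor e L) ∈ P by
    exact H (mea L) L le_rfl
  intro N
  induction N using Nat.strong_induction_on with
  | _ N IH =>
    intro L hL
    by_cases hs : L.Pairwise (· ≥ ·)
    · exact Submodule.subset_span ⟨⟨L, hs⟩, rfl⟩
    · obtain ⟨U, a, b, V, rfl, hab⟩ := exists_ascent hs
      have key : f (eTensor e (U ++ a :: b :: V))
          = f (eTensor e (U ++ b :: a :: V)) + c (e a) (e b) • f (eTensor e (U ++ V)) := by
        have h1 : eTensor e (U ++ a :: b :: V)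
            = eTensor e U * ((TensorAlgebra.ι A (e a) * TensorAlgebra.ι A (e b)) * eTensor e V) := by
          rw [eTensor_append, eTensor_cons, eTensor_cons, mul_assoc]
        have h2 : eTensor e (U ++ b :: a :: V)
            = eTensor e U * ((TensorAlgebra.ι A (e b) * TensorAlgebra.ι A (e a)) * eTensor e V) := by
          rw [eTensor_append, eTensor_cons, eTensor_cons, mul_assoc]
        have h3 : eTensor e (U ++ V) = eTensor e U * eTensor e V := eTensor_append e U V
        rw [h1, h2, h3]
        calc f (eTensor e U * (TensorAlgebra.ι A (e a) * TensorAlgebra.ι A (e b) * eTensor e V))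
            = f (eTensor e U) * (f (TensorAlgebra.ι A (e a) * TensorAlgebra.ι A (e b))
              * f (eTensor e V)) := by rw [map_mul, map_mul]
          _ = f (eTensor e U) * ((f (TensorAlgebra.ι A (e b) * TensorAlgebra.ι A (e a))
              + algebraMap A B (c (e a) (e b))) * f (eTensor e V)) := by rw [hswap]
          _ = f (eTensor e U) * (f (TensorAlgebra.ι A (e b) * TensorAlgebra.ι A (e a))
              * f (eTensor e V))
              + c (e a) (e b) • (f (eTensor e U) * f (eTensor e V)) := by
                rw [add_mul, mul_add]
                congr 1
                rw [Algebra.smul_def, Algebra.commutes, Algebra.commutes, mul_assoc]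
          _ = f (eTensor e U * (TensorAlgebra.ι A (e b) * TensorAlgebra.ι A (e a) * eTensor e V))
              + c (e a) (e b) • f (eTensor e U * eTensor e V) := by
                simp only [map_mul]
      rw [key]
      have hm1 : mea (U ++ b :: a :: V) < N := lt_of_lt_of_le (mea_swap hab) hL
      have hm2 : mea (U ++ V) < N := lt_of_lt_of_le (mea_drop U V a b) hL
      exact P.add_mem (IH _ hm1 _ le_rfl) (P.smul_mem _ (IH _ hm2 _ le_rfl))

end PBWAux2

section PBWRep

open MvPolynomial

variable {A : Type*} [CommRing A] {E : Type*} [AddCommGroup E] [Module A E] {n : ℕ}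

lemma sub_sum_le (s u : Fin n →₀ ℕ) :
    ((s - u).sum fun _ k => k) ≤ s.sum fun _ k => k := by
  classical
  rw [Finsupp.sum, Finsupp.sum]
  have hsub : (s - u).support ⊆ s.support := by
    intro a ha
    rw [Finsupp.mem_support_iff] at ha ⊢
    intro h0
    exact ha (by rw [Finsupp.tsub_apply, h0, Nat.zero_sub])
  calc ∑ a ∈ (s - u).support, (s - u) a ≤ ∑ a ∈ (s - u).support, s a :=
        Finset.sum_le_sum fun a _ => by rw [Finsupp.tsub_apply]; omega
    _ ≤ ∑ a ∈ s.support, s a := Finset.sum_le_sum_of_subset hsub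

lemma totalDegree_pderiv_le (j : Fin n) (p : MvPolynomial (Fin n) A) :
    (pderiv j p).totalDegree ≤ p.totalDegree := by
  conv_lhs => rw [p.as_sum]
  rw [map_sum]
  refine (totalDegree_finset_sum _ _).trans (Finset.sup_le fun v hv => ?_)
  rw [pderiv_monomial]
  refine (totalDegree_monomial_le _ _).trans ?_
  exact le_trans (sub_sum_le v _) (le_totalDegree hv)

lemma pderiv_pderiv_comm (k l : Fin n) (p : MvPolynomial (Fin n) A) :
    pderiv k (pderiv l p) = pderiv l (pderiv k p) := by
  induction p using MvPolynomial.induction_on' with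
  | add p q hp hq => simp [map_add, hp, hq]
  | monomial s a =>
    rcases eq_or_ne k l with rfl | hkl
    · rfl
    · rw [pderiv_monomial, pderiv_monomial, pderiv_monomial, pderiv_monomial]
      have h1 := Finsupp.tsub_apply s (Finsupp.single l 1) k
      rw [Finsupp.single_eq_of_ne hkl, Nat.sub_zero] at h1
      have h2 := Finsupp.tsub_apply s (Finsupp.single k 1) l
      rw [Finsupp.single_eq_of_ne (Ne.symm hkl), Nat.sub_zero] at h2
      rw [h1, h2, tsub_right_comm]
      ring_nf

/-- the lowering operators -/
noncomputable def Dop (e : Module.Basis (Fin n) A E) (c : E →ₗ[A] E →ₗ[A] A) (i : Fin n) :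
    MvPolynomial (Fin n) A →ₗ[A] MvPolynomial (Fin n) A :=
  ∑ j : Fin n, (if j < i then c (e i) (e j) else 0) • (pderiv (R := A) j).toLinearMap

variable (e : Module.Basis (Fin n) A E) (c : E →ₗ[A] E →ₗ[A] A)

lemma Dop_apply (i : Fin n) (p : MvPolynomial (Fin n) A) :
    Dop e c i p = ∑ j : Fin n, (if j < i then c (e i) (e j) else 0) • pderiv j p := by
  rw [Dop, LinearMap.sum_apply]
  exact Finset.sum_congr rfl fun j _ => LinearMap.smul_apply _ _ _

lemma totalDegree_Dop_le (i : Fin n) (p : MvPolynomial (Fin n) A) :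
    (Dop e c i p).totalDegree ≤ p.totalDegree := by
  rw [Dop_apply]
  refine (totalDegree_finset_sum _ _).trans (Finset.sup_le fun j _ => ?_)
  exact (totalDegree_smul_le _ _).trans (totalDegree_pderiv_le j p)

lemma Dop_X_mul (i j : Fin n) (p : MvPolynomial (Fin n) A) :
    Dop e c i (X j * p)
      = (if j < i then c (e i) (e j) else 0) • p + X j * Dop e c i p := by
  rw [Dop_apply, Dop_apply]
  have hterm : ∀ k : Fin n,
      (if k < i then c (e i) (e k) else 0) • pderiv k (X j * p)
        = (if k < i then c (e i) (e k) else 0) • (pderiv k (X j) * p)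
          + X j * ((if k < i then c (e i) (e k) else 0) • pderiv k p) := by
    intro k
    rw [pderiv_mul, smul_add, mul_smul_comm]
  rw [Finset.sum_congr rfl fun k _ => hterm k, Finset.sum_add_distrib, ← Finset.mul_sum]
  congr 1
  rw [Finset.sum_eq_single j]
  · rw [pderiv_X_self, one_mul]
  · intro k _ hkj
    rw [pderiv_X_of_ne (Ne.symm hkj), zero_mul, smul_zero]
  · intro h; exact absurd (Finset.mem_univ j) h

lemma Dop_Dop_comm (i i' : Fin n) (p : MvPolynomial (Fin n) A) :
    Dop e c i (Dop e c i' p) = Dop e c i' (Dop e c i p) := by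
  rw [Dop_apply, Dop_apply, Dop_apply, Dop_apply]
  simp only [map_sum, map_smul, Derivation.map_smul, Finset.smul_sum, smul_smul]
  rw [Finset.sum_comm]
  refine Finset.sum_congr rfl fun k _ => ?_
  refine Finset.sum_congr rfl fun l _ => ?_
  rw [pderiv_pderiv_comm, mul_comm]

/-- the creation+lowering operator attached to a basis vector -/
noncomputable def opE (i : Fin n) : Module.End A (MvPolynomial (Fin n) A) :=
  LinearMap.mulLeft A (X i) + Dop e c i

lemma dmat_eq (hc : ∀ x : E, c x x = 0) (i j : Fin n) :
    (if j < i then c (e i) (e j) else 0)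
      = (if i < j then c (e j) (e i) else 0) + c (e i) (e j) := by
  have hanti : ∀ x y : E, c x y + c y x = 0 := by
    intro x y
    have h := hc (x + y)
    simp only [map_add, LinearMap.add_apply, hc x, hc y] at h
    linear_combination h
  rcases lt_trichotomy i j with h | rfl | h
  · rw [if_neg (by omega), if_pos h]
    linear_combination -hanti (e i) (e j)
  · rw [if_neg (lt_irrefl _), hc, add_zero]
  · rw [if_pos h, if_neg (by omega), zero_add]

lemma opE_comm (hc : ∀ x : E, c x x = 0) (i j : Fin n) (p : MvPolynomial (Fin n) A) :
    opE e c i (opE e c j p) = opE e c j (opE e c i p) + c (e i) (e j) • p := by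
  simp only [opE, LinearMap.add_apply, LinearMap.mulLeft_apply, map_add, Dop_X_mul, mul_add]
  rw [Dop_Dop_comm e c i j p, dmat_eq e c hc i j, add_smul, mul_left_comm (X i) (X j) p]
  abel

/-- the representation map on generators -/
noncomputable def rhoE : E →ₗ[A] Module.End A (MvPolynomial (Fin n) A) :=
  e.constr A (opE e c)

lemma rhoE_basis (i : Fin n) : rhoE e c (e i) = opE e c i := e.constr_basis A _ i

lemma rhoE_comm (hc : ∀ x : E, c x x = 0) (x y : E) :
    rhoE e c x * rhoE e c y
      = rhoE e c y * rhoE e c x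
        + algebraMap A (Module.End A (MvPolynomial (Fin n) A)) (c x y) := by
  have hbb : ∀ i j : Fin n, rhoE e c (e i) * rhoE e c (e j)
      = rhoE e c (e j) * rhoE e c (e i) + algebraMap A _ (c (e i) (e j)) := by
    intro i j
    refine LinearMap.ext fun p => ?_
    rw [Module.End.mul_apply, LinearMap.add_apply, Module.End.mul_apply,
      Module.algebraMap_end_apply, rhoE_basis, rhoE_basis]
    exact opE_comm e c hc i j p
  have h1 : ∀ (j : Fin n) (x : E), rhoE e c x * rhoE e c (e j)
      = rhoE e c (e j) * rhoE e c x + algebraMap A _ (c x (e j)) := by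
    intro j
    have heq : (LinearMap.mulRight A (rhoE e c (e j))).comp (rhoE e c)
        = (LinearMap.mulLeft A (rhoE e c (e j))).comp (rhoE e c)
          + (Algebra.linearMap A (Module.End A (MvPolynomial (Fin n) A))).comp
              (c.flip (e j)) := by
      refine e.ext fun i => ?_
      simp only [LinearMap.comp_apply, LinearMap.add_apply, LinearMap.mulRight_apply,
        LinearMap.mulLeft_apply, Algebra.linearMap_apply, LinearMap.flip_apply]
      exact hbb i j
    intro x
    have := LinearMap.congr_fun heq x
    simpa only [LinearMap.comp_apply, LinearMap.add_apply, LinearMap.mulRight_apply,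
      LinearMap.mulLeft_apply, Algebra.linearMap_apply, LinearMap.flip_apply] using this
  have heq2 : (LinearMap.mulLeft A (rhoE e c x)).comp (rhoE e c)
      = (LinearMap.mulRight A (rhoE e c x)).comp (rhoE e c)
        + (Algebra.linearMap A (Module.End A (MvPolynomial (Fin n) A))).comp (c x) := by
    refine e.ext fun j => ?_
    simp only [LinearMap.comp_apply, LinearMap.add_apply, LinearMap.mulRight_apply,
      LinearMap.mulLeft_apply, Algebra.linearMap_apply]
    exact h1 j x
  have := LinearMap.congr_fun heq2 y
  simpa only [LinearMap.comp_apply, LinearMap.add_apply, LinearMap.mulRight_apply,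
    LinearMap.mulLeft_apply, Algebra.linearMap_apply] using this

end PBWRep

section PBWVac

open MvPolynomial

variable {A : Type*} [CommRing A] {E : Type*} [AddCommGroup E] [Module A E] {n : ℕ}
variable (e : Module.Basis (Fin n) A E) (c : E →ₗ[A] E →ₗ[A] A)

/-- the representation of the tensor algebra on polynomials -/
noncomputable def PsiE : TensorAlgebra A E →ₐ[A] Module.End A (MvPolynomial (Fin n) A) :=
  TensorAlgebra.lift A (rhoE e c)

lemma PsiE_ι (x : E) : PsiE e c (TensorAlgebra.ι A x) = rhoE e c x :=
  TensorAlgebra.lift_ι_apply _ _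

lemma totalDegree_X_mul_le (i : Fin n) (p : MvPolynomial (Fin n) A) :
    (X i * p).totalDegree ≤ 1 + p.totalDegree := by
  refine (totalDegree_mul _ _).trans ?_
  have : (X i : MvPolynomial (Fin n) A).totalDegree ≤ 1 := by
    rw [X]
    refine (totalDegree_monomial_le _ _).trans ?_
    rw [Finsupp.sum_single_index (by rfl)]
    exact le_rfl
  omega

lemma X_mul_monomial_one (i : Fin n) (s : Fin n →₀ ℕ) :
    (X i : MvPolynomial (Fin n) A) * monomial s 1 = monomial (Finsupp.single i 1 + s) 1 := by
  rw [X, monomial_mul, one_mul]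

lemma PsiE_eTensor_one (L : List (Fin n)) :
    ∃ r : MvPolynomial (Fin n) A,
      PsiE e c (eTensor e L) 1 = monomial (cnt L) 1 + r
        ∧ (r = 0 ∨ r.totalDegree < L.length) := by
  induction L with
  | nil =>
    refine ⟨0, ?_, Or.inl rfl⟩
    have h1 : PsiE e c (eTensor e ([] : List (Fin n))) = 1 := by
      rw [eTensor_nil, map_one]
    rw [h1, cnt_nil, add_zero, monomial_zero', C_1]
    exact Module.End.one_apply 1
  | cons i L ih =>
    obtain ⟨r, hr, hdeg⟩ := ih
    rw [eTensor_cons, map_mul, Module.End.mul_apply, hr, PsiE_ι, rhoE_basis]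
    have hq : (monomial (cnt L) (1:A)).totalDegree ≤ L.length := by
      refine (totalDegree_monomial_le _ _).trans ?_
      exact le_of_eq (cnt_sum L)
    have hrd : r.totalDegree ≤ L.length := by
      rcases hdeg with h | h
      · rw [h]; simp
      · omega
    refine ⟨X i * r + Dop e c i (monomial (cnt L) 1 + r), ?_, ?_⟩
    · rw [opE, LinearMap.add_apply, LinearMap.mulLeft_apply, mul_add,
        X_mul_monomial_one, cnt_cons]
      ring
    · by_cases h0 : (X i * r + Dop e c i (monomial (cnt L) 1 + r)) = 0
      · exact Or.inl h0
      · refine Or.inr ?_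
        have h1 : (X i * r).totalDegree ≤ L.length := by
          rcases hdeg with h | h
          · rw [h, mul_zero]; simp
          · exact le_trans (totalDegree_X_mul_le i r) (by omega)
        have h2 : (Dop e c i (monomial (cnt L) 1 + r)).totalDegree ≤ L.length := by
          refine (totalDegree_Dop_le e c i _).trans ?_
          exact (totalDegree_add _ _).trans (by simp [hq, hrd])
        have := (totalDegree_add (X i * r) (Dop e c i (monomial (cnt L) 1 + r)))
        rw [List.length_cons]
        simp only [le_max_iff, le_sup_iff] at this
        omega

end PBWVac

section PBWLI

open MvPolynomial

variable {A : Type*} [CommRing A] {n : ℕ}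

lemma li_triangular (w : {I : List (Fin n) // I.Pairwise (· ≥ ·)} → MvPolynomial (Fin n) A)
    (hw : ∀ I, ∃ r, w I = monomial (cnt I.1) 1 + r ∧ (r = 0 ∨ r.totalDegree < I.1.length)) :
    LinearIndependent A w := by
  classical
  rw [linearIndependent_iff]
  suffices H : ∀ d (l : {I : List (Fin n) // I.Pairwise (· ≥ ·)} →₀ A),
      (∀ I ∈ l.support, I.1.length < d) → Finsupp.linearCombination A w l = 0 → l = 0 by
    intro l hl
    exact H ((l.support.sup fun I => I.1.length) + 1) l
      (fun I hI => Nat.lt_succ_of_le (Finset.le_sup (f := fun J => J.1.length) hI)) hl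
  intro d
  induction d with
  | zero =>
    intro l hl _
    ext I
    by_contra hne
    exact absurd (hl I (Finsupp.mem_support_iff.mpr hne)) (Nat.not_lt_zero _)
  | succ d IH =>
    intro l hl h0
    have hcsum : ∀ I : {I : List (Fin n) // I.Pairwise (· ≥ ·)},
        (∑ i ∈ (cnt I.1).support, cnt I.1 i) = I.1.length := fun I => cnt_sum I.1
    have key : ∀ I₀ ∈ l.support, I₀.1.length = d → l I₀ = 0 := by
      intro I₀ hI₀ hlen
      have hco := congrArg (coeff (cnt I₀.1)) h0
      rw [Finsupp.linearCombination_apply, Finsupp.sum, coeff_sum, coeff_zero] at hco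
      have hrcoeff : ∀ (I : {I : List (Fin n) // I.Pairwise (· ≥ ·)}) (r : MvPolynomial (Fin n) A),
          I ∈ l.support → (r = 0 ∨ r.totalDegree < I.1.length) →
            coeff (cnt I₀.1) r = 0 := by
        intro I r hI hrd
        rcases hrd with rfl | hrd
        · exact coeff_zero _
        · refine coeff_eq_zero_of_totalDegree_lt ?_
          rw [hcsum I₀, hlen]
          have := hl I hI
          omega
      rw [Finset.sum_eq_single I₀] at hco
      · obtain ⟨r, hwI, hrd⟩ := hw I₀
        rw [coeff_smul, hwI, coeff_add, coeff_monomial, if_pos rfl,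
          hrcoeff I₀ r hI₀ hrd, add_zero, smul_eq_mul, mul_one] at hco
        exact hco
      · intro I hI hne
        obtain ⟨r, hwI, hrd⟩ := hw I
        rw [coeff_smul, hwI, coeff_add, coeff_monomial,
          if_neg (fun hcnt => hne (Subtype.ext (cnt_injective I.2 I₀.2 hcnt))),
          hrcoeff I r hI hrd, add_zero, smul_eq_mul, mul_zero]
      · intro h
        exact absurd hI₀ h
    refine IH l ?_ h0
    intro I hI
    have h1 := hl I hI
    rcases eq_or_lt_of_le (Nat.lt_succ_iff.mp h1) with heq | hlt
    · exact absurd (key I hI heq) (Finsupp.mem_support_iff.mp hI)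
    · exact hlt

end PBWLI

section PBWMain

open MvPolynomial

variable {A : Type*} [CommRing A] {E : Type*} [AddCommGroup E] [Module A E] {n : ℕ}

lemma pbw_main {B : Type*} [Ring B] [Algebra A B] (e : Module.Basis (Fin n) A E)
    (c : E →ₗ[A] E →ₗ[A] A) (hc : ∀ x : E, c x x = 0)
    (f : TensorAlgebra A E →ₐ[A] B) (hfs : Function.Surjective f)
    (hswap : ∀ x y : E, f (TensorAlgebra.ι A x * TensorAlgebra.ι A y)
      = f (TensorAlgebra.ι A y * TensorAlgebra.ι A x) + algebraMap A B (c x y))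
    (Φ : B →ₐ[A] Module.End A (MvPolynomial (Fin n) A))
    (hΦ : ∀ t, Φ (f t) = PsiE e c t) :
    Function.Bijective (f.toLinearMap.comp (stilde e).subtype) ∧
    ∃ b : Module.Basis {I : List (Fin n) // I.Pairwise (· ≥ ·)} A B,
      ∀ I, b I = f (eTensor e I.1) := by
  classical
  set g : B →ₗ[A] MvPolynomial (Fin n) A :=
    (LinearMap.applyₗ (1 : MvPolynomial (Fin n) A)).comp Φ.toLinearMap with hg
  have hgf : ∀ t, g (f t) = PsiE e c t 1 := by
    intro t
    simp only [hg, LinearMap.comp_apply, AlgHom.toLinearMap_apply, hΦ]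
    rfl
  have hwli : LinearIndependent A
      (fun I : {I : List (Fin n) // I.Pairwise (· ≥ ·)} => PsiE e c (eTensor e I.1) 1) :=
    li_triangular _ (fun I => PsiE_eTensor_one e c I.1)
  have hLI1 : LinearIndependent A
      (fun I : {I : List (Fin n) // I.Pairwise (· ≥ ·)} => f (eTensor e I.1)) := by
    refine LinearIndependent.of_comp g ?_
    have hfun : (⇑g ∘ fun I : {I : List (Fin n) // I.Pairwise (· ≥ ·)} => f (eTensor e I.1))
        = fun I : {I : List (Fin n) // I.Pairwise (· ≥ ·)} => PsiE e c (eTensor e I.1) 1 := by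
      funext I
      exact hgf _
    rw [hfun]
    exact hwli
  have hsets : stilde e = Submodule.span A
      (Set.range fun I : {I : List (Fin n) // I.Pairwise (· ≥ ·)} => eTensor e I.1) := by
    have hset : {t | ∃ I : List (Fin n), I.Pairwise (· ≥ ·) ∧ t = eTensor e I}
        = Set.range (fun I : {I : List (Fin n) // I.Pairwise (· ≥ ·)} => eTensor e I.1) := by
      ext t
      constructor
      · rintro ⟨I, hI, rfl⟩; exact ⟨⟨I, hI⟩, rfl⟩
      · rintro ⟨I, rfl⟩; exact ⟨I.1, I.2, rfl⟩
    rw [stilde, hset]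
  have hmemst : ∀ I : {I : List (Fin n) // I.Pairwise (· ≥ ·)}, eTensor e I.1 ∈ stilde e := by
    intro I
    exact Submodule.subset_span ⟨I.1, I.2, rfl⟩
  have hinj : Function.Injective (f.toLinearMap.comp (stilde e).subtype) := by
    rw [← LinearMap.ker_eq_bot, Submodule.eq_bot_iff]
    intro x hx
    have hfx : f x.1 = 0 := hx
    have hx1 : x.1 ∈ Submodule.span A
        (Set.range fun I : {I : List (Fin n) // I.Pairwise (· ≥ ·)} => eTensor e I.1) :=
      hsets ▸ x.2
    rw [Finsupp.mem_span_range_iff_exists_finsupp] at hx1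
    obtain ⟨l, hl⟩ := hx1
    have hcomb : Finsupp.linearCombination A
        (fun I : {I : List (Fin n) // I.Pairwise (· ≥ ·)} => f (eTensor e I.1)) l = 0 := by
      have h1 : Finsupp.linearCombination A
          (fun I : {I : List (Fin n) // I.Pairwise (· ≥ ·)} => eTensor e I.1) l = x.1 := by
        rw [Finsupp.linearCombination_apply]; exact hl
      have h2 := Finsupp.apply_linearCombination A f.toLinearMap
        (fun I : {I : List (Fin n) // I.Pairwise (· ≥ ·)} => eTensor e I.1) l
      rw [h1] at h2
      have h3 : (⇑f.toLinearMap ∘ fun I : {I : List (Fin n) // I.Pairwise (· ≥ ·)} =>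
          eTensor e I.1) = fun I : {I : List (Fin n) // I.Pairwise (· ≥ ·)} =>
            f (eTensor e I.1) := rfl
      rw [h3] at h2
      rw [← h2]
      exact hfx
    have hl0 := linearIndependent_iff.mp hLI1 l hcomb
    refine Subtype.ext ?_
    rw [← hl, hl0]
    simp
  have hspan : ∀ b : B, b ∈ Submodule.span A
      (Set.range fun I : {I : List (Fin n) // I.Pairwise (· ≥ ·)} => f (eTensor e I.1)) := by
    intro b
    obtain ⟨t, rfl⟩ := hfs b
    have ht : t ∈ Submodule.span A (Set.range fun L : List (Fin n) => eTensor e L) := by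
      rw [span_eTensor_top e]; trivial
    have hmap : f t ∈ Submodule.map f.toLinearMap
        (Submodule.span A (Set.range fun L : List (Fin n) => eTensor e L)) :=
      ⟨t, ht, rfl⟩
    rw [Submodule.map_span] at hmap
    refine Submodule.span_le.mpr ?_ hmap
    rintro _ ⟨_, ⟨L, rfl⟩, rfl⟩
    exact straighten e f (fun x y => c x y) hswap L
  have hsurj : Function.Surjective (f.toLinearMap.comp (stilde e).subtype) := by
    intro b
    have hle : Submodule.span A
        (Set.range fun I : {I : List (Fin n) // I.Pairwise (· ≥ ·)} => f (eTensor e I.1))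
          ≤ LinearMap.range (f.toLinearMap.comp (stilde e).subtype) := by
      rw [Submodule.span_le]
      rintro _ ⟨I, rfl⟩
      exact ⟨⟨eTensor e I.1, hmemst I⟩, rfl⟩
    exact hle (hspan b)
  refine ⟨⟨hinj, hsurj⟩, Module.Basis.mk hLI1 (fun b _ => hspan b), fun I => Module.Basis.mk_apply _ _ _⟩

end PBWMain


/-- **Poincaré–Birkhoff–Witt.** The restrictions of `μ_S` and `μ_W` to
`S̃(E)` are `A`-module isomorphisms onto `S(E)` resp. `W(E)`; consequently the families
`{μ_S(e_I)}` and `{μ_W(e_I)}` indexed by nonincreasing sequences `I` are `A`-bases of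
`S(E)` resp. `W(E)`. -/
theorem stmt2 (A : Type*) [CommRing A] (E : Type*) [AddCommGroup E] [Module A E]
    (lam : A) (ω : E →ₗ[A] E →ₗ[A] A) (halt : ∀ x : E, ω x x = 0)
    (ν ν' : ℕ) (e : Module.Basis (Fin (ν + ν')) A E) :
    Function.Bijective
      ((RingQuot.mkAlgHom A (symRel A E)).toLinearMap.comp (stilde e).subtype) ∧
    Function.Bijective
      ((RingQuot.mkAlgHom A (weylRel A lam ω)).toLinearMap.comp (stilde e).subtype) ∧
    (∃ bS : Module.Basis {I : List (Fin (ν + ν')) // List.Pairwise (· ≥ ·) I} A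
        (RingQuot (symRel A E)),
      ∀ I, bS I = RingQuot.mkAlgHom A (symRel A E) (eTensor e I.1)) ∧
    (∃ bW : Module.Basis {I : List (Fin (ν + ν')) // List.Pairwise (· ≥ ·) I} A
        (RingQuot (weylRel A lam ω)),
      ∀ I, bW I = RingQuot.mkAlgHom A (weylRel A lam ω) (eTensor e I.1)) := by
  classical
  -- the symmetric algebra case
  have hcS : ∀ x : E, (0 : E →ₗ[A] E →ₗ[A] A) x x = 0 := fun x => rfl
  have hswapS : ∀ x y : E,
      RingQuot.mkAlgHom A (symRel A E) (TensorAlgebra.ι A x * TensorAlgebra.ι A y)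
        = RingQuot.mkAlgHom A (symRel A E) (TensorAlgebra.ι A y * TensorAlgebra.ι A x)
          + algebraMap A (RingQuot (symRel A E)) ((0 : E →ₗ[A] E →ₗ[A] A) x y) := by
    intro x y
    rw [RingQuot.mkAlgHom_rel A (⟨x, y, rfl, rfl⟩ : symRel A E _ _)]
    simp
  have hrespS : ∀ a b, symRel A E a b →
      PsiE e (0 : E →ₗ[A] E →ₗ[A] A) a = PsiE e (0 : E →ₗ[A] E →ₗ[A] A) b := by
    rintro _ _ ⟨x, y, rfl, rfl⟩
    rw [map_mul, map_mul, PsiE_ι, PsiE_ι,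
      rhoE_comm e (0 : E →ₗ[A] E →ₗ[A] A) hcS x y]
    simp
  have hΦS : ∀ t, RingQuot.liftAlgHom A ⟨PsiE e (0 : E →ₗ[A] E →ₗ[A] A), hrespS⟩
      (RingQuot.mkAlgHom A (symRel A E) t) = PsiE e (0 : E →ₗ[A] E →ₗ[A] A) t :=
    fun t => RingQuot.liftAlgHom_mkAlgHom_apply _ _ _ _
  obtain ⟨hbijS, hbasS⟩ := pbw_main e (0 : E →ₗ[A] E →ₗ[A] A) hcS
    (RingQuot.mkAlgHom A (symRel A E)) (RingQuot.mkAlgHom_surjective A _) hswapS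
    (RingQuot.liftAlgHom A ⟨PsiE e (0 : E →ₗ[A] E →ₗ[A] A), hrespS⟩) hΦS
  -- the Weyl algebra case
  have hcW : ∀ x : E, (lam • ω) x x = 0 := by
    intro x
    simp [halt x]
  have hcWxy : ∀ x y : E, (lam • ω) x y = lam * ω x y := by
    intro x y
    simp
  have hswapW : ∀ x y : E,
      RingQuot.mkAlgHom A (weylRel A lam ω) (TensorAlgebra.ι A x * TensorAlgebra.ι A y)
        = RingQuot.mkAlgHom A (weylRel A lam ω) (TensorAlgebra.ι A y * TensorAlgebra.ι A x)
          + algebraMap A (RingQuot (weylRel A lam ω)) ((lam • ω) x y) := by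
    intro x y
    rw [RingQuot.mkAlgHom_rel A (⟨x, y, rfl, rfl⟩ : weylRel A lam ω _ _),
      map_add, AlgHom.commutes, hcWxy]
  have hrespW : ∀ a b, weylRel A lam ω a b → PsiE e (lam • ω) a = PsiE e (lam • ω) b := by
    rintro _ _ ⟨x, y, rfl, rfl⟩
    rw [map_mul, map_add, map_mul, PsiE_ι, PsiE_ι, AlgHom.commutes,
      rhoE_comm e (lam • ω) hcW x y, hcWxy]
  have hΦW : ∀ t, RingQuot.liftAlgHom A ⟨PsiE e (lam • ω), hrespW⟩
      (RingQuot.mkAlgHom A (weylRel A lam ω) t) = PsiE e (lam • ω) t :=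
    fun t => RingQuot.liftAlgHom_mkAlgHom_apply _ _ _ _
  obtain ⟨hbijW, hbasW⟩ := pbw_main e (lam • ω) hcW
    (RingQuot.mkAlgHom A (weylRel A lam ω)) (RingQuot.mkAlgHom_surjective A _) hswapW
    (RingQuot.liftAlgHom A ⟨PsiE e (lam • ω), hrespW⟩) hΦW
  exact ⟨hbijS, hbijW, hbasS, hbasW⟩
end

section
/- Let e'_i = Σ_j A_i^j e_j (1 ≤ i ≤ ν+ν') be another basis of E, where the invertible matrix (A_i^j) over A is block-diagonal with respect to the splitting, i.e. A_α^β = 0 and A_β^α = 0 whenever α ≤ ν < β (so e'_1, …, e'_ν is a basis of L and e'_{ν+1}, …, e'_{ν+ν'} is a basis of L'). Let S̃'(E) ⊆ T(E) be the A-submodule spanned by the tensors e'_I over all nonincreasing sequences I. Then the restrictions of μ_S and μ_W to S̃'(E) are A-module isomorphisms onto S(E) and W(E), and the composite isomorphisms coincide: μ_W ∘ (μ_S|S̃'(E))⁻¹ = μ_W ∘ (μ_S|S̃(E))⁻¹ as maps S(E) → W(E). -/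
/-- `f_I = f_{i₁} ⊗ ⋯ ⊗ f_{i_p} ∈ T(E)` for a list of indices `I` (with `f_∅ = 1`). -/
noncomputable def famTensor {A : Type*} [CommRing A] {E : Type*} [AddCommGroup E]
    [Module A E] {n : ℕ} (f : Fin n → E) (I : List (Fin n)) : TensorAlgebra A E :=
  (I.map fun i => TensorAlgebra.ι A (f i)).prod

/-- The `A`-submodule of `T(E)` spanned by the tensors `f_I` over all nonincreasing
sequences `I`. -/
noncomputable def stildeOf {A : Type*} [CommRing A] {E : Type*} [AddCommGroup E]
    [Module A E] {n : ℕ} (f : Fin n → E) : Submodule A (TensorAlgebra A E) :=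
  Submodule.span A {t | ∃ I : List (Fin n), List.Pairwise (· ≥ ·) I ∧ t = famTensor f I}

noncomputable section
namespace Stmt4Aux

open TensorAlgebra MvPolynomial List

variable {A : Type*} [CommRing A] {E : Type*} [AddCommGroup E] [Module A E] {n : ℕ}



def sList (m : Multiset (Fin n)) : List (Fin n) := m.sort (· ≥ ·)

lemma sList_sorted (m : Multiset (Fin n)) : (sList m).Pairwise (· ≥ ·) :=
  Multiset.pairwise_sort m _

lemma sList_coe (m : Multiset (Fin n)) : (sList m : Multiset (Fin n)) = m :=
  Multiset.sort_eq m _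

lemma sList_perm (I : List (Fin n)) : sList (↑I) ~ I :=
  Multiset.coe_eq_coe.mp (sList_coe _)

lemma sList_eq_of_sorted {I : List (Fin n)} (h : I.Pairwise (· ≥ ·)) : sList (↑I) = I :=
  List.Perm.eq_of_pairwise' (sList_sorted _) h (sList_perm I)

def mI (I : List (Fin n)) : Fin n →₀ ℕ := Multiset.toFinsupp (↑I)

lemma mI_apply (I : List (Fin n)) (k : Fin n) : mI I k = I.count k := by
  simp [mI]

lemma mI_nil : mI ([] : List (Fin n)) = 0 := by simp [mI]

lemma mI_cons (i : Fin n) (I : List (Fin n)) : mI (i :: I) = mI I + Finsupp.single i 1 := by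
  ext a
  by_cases h : a = i
  · simp [mI_apply, List.count_cons, Finsupp.single_apply, h]
  · simp [mI_apply, List.count_cons, Finsupp.single_apply, h]
    exact fun h' => h h'.symm

def sListF (d : Fin n →₀ ℕ) : List (Fin n) := sList d.toMultiset

lemma sListF_sorted (d : Fin n →₀ ℕ) : (sListF d).Pairwise (· ≥ ·) := sList_sorted _

lemma mI_sListF (d : Fin n →₀ ℕ) : mI (sListF d) = d := by
  simp [mI, sListF, sList_coe]

lemma sListF_mI {I : List (Fin n)} (h : I.Pairwise (· ≥ ·)) : sListF (mI I) = I := by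
  rw [sListF, mI, Multiset.toFinsupp_toMultiset, sList_eq_of_sorted h]

lemma sListF_zero : sListF (0 : Fin n →₀ ℕ) = [] := by
  have : (sListF (0 : Fin n →₀ ℕ) : Multiset (Fin n)) = ([] : List (Fin n)) := by
    simp [sListF, sList_coe]
  exact List.Perm.eq_of_pairwise' (sListF_sorted _) (by simp) (Multiset.coe_eq_coe.mp this)

lemma sListF_add_single (d : Fin n →₀ ℕ) (i : Fin n) :
    sListF (d + Finsupp.single i 1) = List.orderedInsert (· ≥ ·) i (sListF d) := by
  have hc : (sListF (d + Finsupp.single i 1) : Multiset (Fin n))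
      = ((List.orderedInsert (· ≥ ·) i (sListF d) : List (Fin n)) : Multiset (Fin n)) := by
    rw [Multiset.coe_eq_coe.mpr (List.perm_orderedInsert _ i (sListF d))]
    rw [sListF, sList_coe, Finsupp.toMultiset_add, Finsupp.toMultiset_single]
    rw [← Multiset.cons_coe, sListF, sList_coe]
    simp [add_comm, Multiset.singleton_add]
  exact List.Perm.eq_of_pairwise' (sListF_sorted _)
    ((sListF_sorted d).orderedInsert i _) (Multiset.coe_eq_coe.mp hc)

lemma toMultiset_sub_single {d : Fin n →₀ ℕ} {k : Fin n} (h : d k ≠ 0) :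
    (d - Finsupp.single k 1).toMultiset = d.toMultiset.erase k := by
  ext a
  by_cases hak : a = k
  · subst hak
    simp [Multiset.count_erase_self, Finsupp.count_toMultiset, Finsupp.tsub_apply]
  · simp [Multiset.count_erase_of_ne hak, Finsupp.count_toMultiset, Finsupp.tsub_apply,
      Finsupp.single_apply, Ne.symm hak]

lemma sListF_sub_single {d : Fin n →₀ ℕ} {k : Fin n} (h : d k ≠ 0) :
    sListF (d - Finsupp.single k 1) = (sListF d).erase k := by
  have hc : (sListF (d - Finsupp.single k 1) : Multiset (Fin n))
      = (((sListF d).erase k : List (Fin n)) : Multiset (Fin n)) := by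
    rw [← Multiset.coe_erase, sListF, sList_coe, sListF, sList_coe, toMultiset_sub_single h]
  exact List.Perm.eq_of_pairwise' (sListF_sorted _)
    ((sListF_sorted d).sublist List.erase_sublist) (Multiset.coe_eq_coe.mp hc)

lemma cons_erase_self_of_sorted {I : List (Fin n)} {j : Fin n} (h : I.Pairwise (· ≥ ·))
    (hle : ∀ x ∈ I, x ≤ j) (hm : j ∈ I) : j :: I.erase j = I := by
  cases I with
  | nil => cases hm
  | cons a t =>
    have haj : a = j := by
      refine le_antisymm (hle a (List.mem_cons_self)) ?_
      rcases List.mem_cons.mp hm with h' | h'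
      · exact h'.le
      · exact (List.pairwise_cons.mp h).1 j h'
    subst haj
    rw [List.erase_cons_head]

lemma dropWhile_lt {ν : ℕ} : ∀ I : List (Fin n), I.Pairwise (· ≥ ·) →
    ∀ x : Fin n, x ∈ I.dropWhile (fun a : Fin n => decide (ν ≤ a.val)) → x.val < ν := by
  intro I
  induction I with
  | nil => simp
  | cons a t ih =>
    intro hs x hx
    rw [List.dropWhile_cons] at hx
    by_cases hp : ν ≤ (a : ℕ)
    · simp only [hp, decide_eq_true_eq, if_pos, decide_true] at hx
      exact ih (List.pairwise_cons.mp hs).2 x hx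
    · simp only [hp, decide_false] at hx
      push_neg at hp
      rcases List.mem_cons.mp hx with rfl | h'
      · exact hp
      · exact lt_of_le_of_lt ((List.pairwise_cons.mp hs).1 x h') hp


lemma famTensor_nil (f : Fin n → E) : famTensor (A := A) f ([] : List (Fin n)) = 1 := rfl

lemma famTensor_cons (f : Fin n → E) (i : Fin n) (I : List (Fin n)) :
    famTensor (A := A) f (i :: I) = TensorAlgebra.ι A (f i) * famTensor f I := by
  simp [famTensor]

lemma famTensor_append (f : Fin n → E) (I J : List (Fin n)) :
    famTensor (A := A) f (I ++ J) = famTensor f I * famTensor f J := by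
  simp [famTensor]

lemma pderiv_pderiv_comm (k l : Fin n) (p : MvPolynomial (Fin n) A) :
    pderiv k (pderiv l p) = pderiv l (pderiv k p) := by
  induction p using MvPolynomial.induction_on' with
  | add p q hp hq => simp [map_add, hp, hq]
  | monomial d a =>
    rcases eq_or_ne k l with rfl | hkl
    · rfl
    · simp only [pderiv_monomial]
      have h1 : ((d - Finsupp.single l 1 : Fin n →₀ ℕ)) k = d k := by
        simp [Finsupp.tsub_apply, Finsupp.single_apply, Ne.symm hkl]
      have h2 : ((d - Finsupp.single k 1 : Fin n →₀ ℕ)) l = d l := by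
        simp [Finsupp.tsub_apply, Finsupp.single_apply, hkl]
      rw [h1, h2]
      have h3 : d - Finsupp.single l 1 - Finsupp.single k 1
          = d - Finsupp.single k 1 - Finsupp.single l 1 := by
        rw [tsub_tsub, tsub_tsub, add_comm]
      rw [h3]
      ring_nf

/-- A bundled setting for a "PBW"-style quotient of the tensor algebra. -/
structure Setup (A : Type*) [CommRing A] (E : Type*) [AddCommGroup E] [Module A E]
    (n : ℕ) where
  b : Module.Basis (Fin n) A E
  κ : E →ₗ[A] E →ₗ[A] A
  r : TensorAlgebra A E → TensorAlgebra A E → Prop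
  hκ : ∀ x : E, κ x x = 0
  hr1 : ∀ ⦃a c : TensorAlgebra A E⦄, r a c → ∃ x y : E,
    a = TensorAlgebra.ι A x * TensorAlgebra.ι A y ∧
    c = TensorAlgebra.ι A y * TensorAlgebra.ι A x + algebraMap A (TensorAlgebra A E) (κ x y)
  hr2 : ∀ x y : E, r (TensorAlgebra.ι A x * TensorAlgebra.ι A y)
    (TensorAlgebra.ι A y * TensorAlgebra.ι A x + algebraMap A (TensorAlgebra A E) (κ x y))

namespace Setup

variable (S : Setup A E n)

def μ : TensorAlgebra A E →ₐ[A] RingQuot S.r := RingQuot.mkAlgHom A S.r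

lemma skew (x y : E) : S.κ x y = - S.κ y x := by
  have h := S.hκ (x + y)
  simp only [map_add, LinearMap.add_apply, S.hκ x, S.hκ y] at h
  linear_combination h

lemma rel_mu (x y : E) : S.μ (TensorAlgebra.ι A x * TensorAlgebra.ι A y)
    = S.μ (TensorAlgebra.ι A y * TensorAlgebra.ι A x)
      + algebraMap A (RingQuot S.r) (S.κ x y) := by
  have h := RingQuot.mkAlgHom_rel A (S.hr2 x y)
  simpa [μ, map_add, AlgHom.commutes] using h

def c (i j : Fin n) : A := S.κ (S.b i) (S.b j)

def ctil (i j : Fin n) : A := if i < j then S.c i j else 0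

abbrev V (A : Type*) [CommRing A] (n : ℕ) := MvPolynomial (Fin n) A

def D (i : Fin n) : V A n →ₗ[A] V A n :=
  ∑ k, S.ctil i k • (pderiv k : Derivation A (V A n) (V A n)).toLinearMap

lemma D_apply (i : Fin n) (p : V A n) :
    S.D i p = ∑ k, S.ctil i k • pderiv k p := by
  simp [D]

def ρ0 (i : Fin n) : Module.End A (V A n) :=
  LinearMap.mulLeft A (X i) + S.D i

lemma ρ0_apply (i : Fin n) (p : V A n) : S.ρ0 i p = X i * p + S.D i p := rfl

def ρ : E →ₗ[A] Module.End A (V A n) := S.b.constr A S.ρ0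

lemma ρ_basis (i : Fin n) : S.ρ (S.b i) = S.ρ0 i := S.b.constr_basis A S.ρ0 i

lemma D_mul_X (i j : Fin n) (p : V A n) :
    S.D i (X j * p) = S.ctil i j • p + X j * S.D i p := by
  rw [D_apply, D_apply]
  have : ∀ k : Fin n, S.ctil i k • pderiv k (X j * p)
      = S.ctil i k • (pderiv k (X j) * p) + S.ctil i k • (X j * pderiv k p) := by
    intro k; rw [pderiv_mul, smul_add]
  rw [Finset.sum_congr rfl fun k _ => this k, Finset.sum_add_distrib]
  congr 1
  · rw [Finset.sum_eq_single j]
    · simp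
    · intro k _ hkj
      rw [pderiv_X_of_ne (Ne.symm hkj), zero_mul, smul_zero]
    · simp
  · rw [Finset.mul_sum]
    exact Finset.sum_congr rfl fun k _ => (mul_smul_comm _ _ _).symm

lemma D_D_comm (i j : Fin n) (p : V A n) : S.D i (S.D j p) = S.D j (S.D i p) := by
  simp only [D_apply, map_sum, map_smul, Finset.smul_sum]
  rw [Finset.sum_comm]
  refine Finset.sum_congr rfl fun k _ => Finset.sum_congr rfl fun l _ => ?_
  rw [pderiv_pderiv_comm, smul_comm]

lemma ctil_eq (i j : Fin n) : S.ctil i j = S.ctil j i + S.c i j := by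
  rcases lt_trichotomy i j with h | rfl | h
  · simp [ctil, h, not_lt_of_gt h]
  · simp [ctil, c, S.hκ]
  · have : S.c j i = - S.c i j := by rw [c, c, ← S.skew]
    simp [ctil, h, not_lt_of_gt h, this]

lemma commρ0 (i j : Fin n) :
    S.ρ0 i * S.ρ0 j = S.ρ0 j * S.ρ0 i + S.c i j • (1 : Module.End A (V A n)) := by
  apply LinearMap.ext; intro p
  simp only [Module.End.mul_apply, LinearMap.add_apply, LinearMap.smul_apply,
    Module.End.one_apply, ρ0_apply, map_add, D_mul_X, mul_add]
  rw [S.D_D_comm i j p, S.ctil_eq i j, mul_left_comm (X i) (X j) p, add_smul]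
  abel

lemma commρ (x y : E) :
    S.ρ x * S.ρ y = S.ρ y * S.ρ x + algebraMap A (Module.End A (V A n)) (S.κ x y) := by
  have key : (LinearMap.mul A (Module.End A (V A n))).compl₁₂ S.ρ S.ρ
      = ((LinearMap.mul A (Module.End A (V A n))).compl₁₂ S.ρ S.ρ).flip
        + S.κ.compr₂ (Algebra.linearMap A (Module.End A (V A n))) := by
    apply LinearMap.ext_basis S.b S.b
    intro i j
    simp only [LinearMap.compl₁₂_apply, LinearMap.flip_apply, LinearMap.add_apply,
      LinearMap.compr₂_apply, Algebra.linearMap_apply, LinearMap.mul_apply']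
    rw [S.ρ_basis, S.ρ_basis, Module.algebraMap_end_eq_smul_id]
    have h := S.commρ0 i j
    rwa [show (1 : Module.End A (V A n)) = LinearMap.id from rfl] at h
  have h := LinearMap.congr_fun (LinearMap.congr_fun key x) y
  simpa [LinearMap.compl₁₂_apply, LinearMap.flip_apply, LinearMap.add_apply,
    LinearMap.compr₂_apply, Algebra.linearMap_apply, LinearMap.mul_apply'] using h

def Φ : RingQuot S.r →ₐ[A] Module.End A (V A n) :=
  RingQuot.liftAlgHom A ⟨TensorAlgebra.lift A S.ρ, by
    rintro a c h
    obtain ⟨x, y, rfl, rfl⟩ := S.hr1 h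
    simp only [map_mul, map_add, TensorAlgebra.lift_ι_apply, AlgHom.commutes]
    exact S.commρ x y⟩

lemma Φ_ι (x : E) : S.Φ (S.μ (TensorAlgebra.ι A x)) = S.ρ x := by
  rw [μ, Φ, RingQuot.liftAlgHom_mkAlgHom_apply, TensorAlgebra.lift_ι_apply]

def π : RingQuot S.r →ₗ[A] V A n :=
  (LinearMap.applyₗ (1 : V A n)).comp S.Φ.toLinearMap

lemma π_apply (w : RingQuot S.r) : S.π w = S.Φ w 1 := rfl

def B : V A n →ₗ[A] TensorAlgebra A E :=
  (MvPolynomial.basisMonomials (Fin n) A).constr A fun d => famTensor (⇑S.b) (sListF d)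

lemma B_monomial (d : Fin n →₀ ℕ) :
    S.B (monomial d (1:A)) = famTensor (⇑S.b) (sListF d) := by
  have h : (monomial d (1:A)) = (MvPolynomial.basisMonomials (Fin n) A) d :=
    (congrFun (coe_basisMonomials (Fin n) A) d).symm
  rw [h]
  exact (MvPolynomial.basisMonomials (Fin n) A).constr_basis A _ d

lemma ρ0_monomial (i : Fin n) (d : Fin n →₀ ℕ) :
    S.ρ0 i (monomial d (1:A)) = monomial (d + Finsupp.single i 1) (1:A)
      + ∑ k, (S.ctil i k * ((d k : A))) • monomial (d - Finsupp.single k 1) (1:A) := by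
  rw [ρ0_apply, D_apply]
  congr 1
  · rw [X, monomial_mul, one_mul, add_comm]
  · refine Finset.sum_congr rfl fun k _ => ?_
    simp [pderiv_monomial, smul_monomial, smul_eq_mul]

lemma π_μ_famTensor : ∀ I : List (Fin n), I.Pairwise (· ≥ ·) →
    S.π (S.μ (famTensor (⇑S.b) I)) = monomial (mI I) (1:A) := by
  intro I
  induction I with
  | nil =>
    intro _
    simp [famTensor_nil, π_apply, mI_nil, monomial_zero', C_1]
  | cons i I ih =>
    intro hs
    obtain ⟨hle, hs'⟩ := List.pairwise_cons.mp hs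
    rw [famTensor_cons, map_mul, π_apply, map_mul, Module.End.mul_apply, S.Φ_ι, S.ρ_basis]
    have hin : S.Φ (S.μ (famTensor (⇑S.b) I)) 1 = monomial (mI I) (1:A) := ih hs'
    rw [hin, ρ0_monomial, mI_cons]
    have hz : ∀ k ∈ (Finset.univ : Finset (Fin n)),
        (S.ctil i k * (((mI I) k : ℕ) : A)) • monomial ((mI I) - Finsupp.single k 1) (1:A)
          = 0 := by
      intro k _
      by_cases hik : i < k
      · have : (mI I) k = 0 := by
          rw [mI_apply, List.count_eq_zero]
          intro hk
          exact absurd (hle k hk) (not_le_of_gt hik)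
        rw [this, Nat.cast_zero, mul_zero, zero_smul]
      · rw [ctil, if_neg hik, zero_mul, zero_smul]
    rw [Finset.sum_eq_zero hz, add_zero]

lemma straighten : ∀ (I : List (Fin n)), I.Pairwise (· ≥ ·) → ∀ i : Fin n,
    S.μ (TensorAlgebra.ι A (S.b i)) * S.μ (famTensor (⇑S.b) I)
      = S.μ (famTensor (⇑S.b) (List.orderedInsert (· ≥ ·) i I))
        + ∑ k, (S.ctil i k * (((mI I) k : ℕ) : A)) • S.μ (famTensor (⇑S.b) (I.erase k)) := by
  intro I
  induction I with
  | nil =>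
    intro _ i
    rw [famTensor_nil, map_one, mul_one]
    simp [List.orderedInsert, famTensor_cons, famTensor_nil, mI_nil]
  | cons j I' ih =>
    intro hs i
    obtain ⟨hle, hs'⟩ := List.pairwise_cons.mp hs
    by_cases hij : i ≥ j
    · rw [List.orderedInsert, if_pos hij]
      have hz : ∀ k ∈ (Finset.univ : Finset (Fin n)),
          (S.ctil i k * (((mI (j :: I')) k : ℕ) : A)) • S.μ (famTensor (⇑S.b) ((j :: I').erase k))
            = 0 := by
        intro k _
        by_cases hik : i < k
        · have : (mI (j :: I')) k = 0 := by
            rw [mI_apply, List.count_eq_zero]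
            intro hk
            rcases List.mem_cons.mp hk with rfl | hk'
            · exact absurd hij (not_le_of_gt hik)
            · exact absurd (le_trans (hle k hk') hij) (not_le_of_gt hik)
          rw [this, Nat.cast_zero, mul_zero, zero_smul]
        · rw [ctil, if_neg hik, zero_mul, zero_smul]
      rw [Finset.sum_eq_zero hz, add_zero, famTensor_cons _ i (j :: I'), map_mul]
    · have hlt : i < j := lt_of_not_ge hij
      have hmul : ∀ L : List (Fin n), S.μ (TensorAlgebra.ι A (S.b j)) * S.μ (famTensor (⇑S.b) L)
          = S.μ (famTensor (⇑S.b) (j :: L)) := fun L => by rw [famTensor_cons, map_mul]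
      rw [List.orderedInsert, if_neg hij]
      rw [famTensor_cons _ j I', map_mul, ← mul_assoc, ← map_mul, S.rel_mu, add_mul,
        map_mul, mul_assoc, ih hs' i, mul_add, hmul, Finset.mul_sum]
      rw [← Algebra.smul_def]
      have hsum1 : ∀ k ∈ (Finset.univ : Finset (Fin n)),
          S.μ (TensorAlgebra.ι A (S.b j)) * ((S.ctil i k * (((mI I') k : ℕ) : A)) •
              S.μ (famTensor (⇑S.b) (I'.erase k)))
            = (S.ctil i k * (((mI I') k : ℕ) : A)) • S.μ (famTensor (⇑S.b) ((j :: I').erase k)) := by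
        intro k _
        rw [mul_smul_comm, hmul]
        by_cases h0 : (mI I') k = 0
        · rw [h0, Nat.cast_zero, mul_zero, zero_smul, zero_smul]
        · have hk : k ∈ I' := by
            rw [mI_apply] at h0
            exact List.count_pos_iff.mp (Nat.pos_of_ne_zero h0)
          by_cases hkj : k = j
          · subst hkj
            rw [List.erase_cons_head, cons_erase_self_of_sorted hs' (fun x hx => le_trans (hle x hx) (le_refl _)) hk]
          · rw [List.erase_cons_tail (by simpa using (Ne.symm hkj))]
      rw [Finset.sum_congr rfl hsum1]
      have hsplit : ∀ k : Fin n, (S.ctil i k * (((mI (j :: I')) k : ℕ) : A)) •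
            S.μ (famTensor (⇑S.b) ((j :: I').erase k))
          = (S.ctil i k * (((mI I') k : ℕ) : A)) • S.μ (famTensor (⇑S.b) ((j :: I').erase k))
            + (if j = k then S.ctil i k • S.μ (famTensor (⇑S.b) ((j :: I').erase k)) else 0) := by
        intro k
        rw [mI_cons, Finsupp.add_apply, Finsupp.single_apply, Nat.cast_add, mul_add, add_smul]
        congr 1
        by_cases hjk : j = k
        · rw [if_pos hjk, if_pos hjk, Nat.cast_one, mul_one]
        · rw [if_neg hjk, if_neg hjk, Nat.cast_zero, mul_zero, zero_smul]
      rw [Finset.sum_congr rfl (fun k _ => hsplit k), Finset.sum_add_distrib,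
        Finset.sum_ite_eq, if_pos (Finset.mem_univ j), List.erase_cons_head]
      rw [ctil, if_pos hlt]
      show _ + S.c i j • _ = _
      abel

lemma μ_B_ρ0_monomial (i : Fin n) (d : Fin n →₀ ℕ) :
    S.μ (S.B (S.ρ0 i (monomial d (1:A))))
      = S.μ (TensorAlgebra.ι A (S.b i)) * S.μ (S.B (monomial d (1:A))) := by
  rw [B_monomial, S.straighten (sListF d) (sListF_sorted d) i, ρ0_monomial, map_add, map_add,
    map_sum, map_sum, B_monomial, sListF_add_single]
  congr 1
  refine Finset.sum_congr rfl fun k _ => ?_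
  rw [map_smul, map_smul, B_monomial, mI_sListF]
  by_cases h0 : d k = 0
  · rw [h0, Nat.cast_zero, mul_zero, zero_smul, zero_smul]
  · rw [sListF_sub_single h0]

lemma μ_B_ρ (x : E) (p : V A n) :
    S.μ (S.B (S.ρ x p)) = S.μ (TensorAlgebra.ι A x) * S.μ (S.B p) := by
  have hx : x ∈ Submodule.span A (Set.range ⇑S.b) := by
    rw [Module.Basis.span_eq]; exact Submodule.mem_top
  induction hx using Submodule.span_induction with
  | mem z hz =>
    obtain ⟨i, rfl⟩ := hz
    have key : S.μ.toLinearMap ∘ₗ (S.B ∘ₗ S.ρ (S.b i))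
        = (LinearMap.mulLeft A (S.μ (TensorAlgebra.ι A (S.b i)))) ∘ₗ
            (S.μ.toLinearMap ∘ₗ S.B) := by
      apply Module.Basis.ext (MvPolynomial.basisMonomials (Fin n) A)
      intro d
      have hd : (MvPolynomial.basisMonomials (Fin n) A) d = monomial d (1:A) :=
        congrFun (coe_basisMonomials (Fin n) A) d
      simp only [LinearMap.comp_apply, AlgHom.toLinearMap_apply, LinearMap.mulLeft_apply, hd]
      rw [S.ρ_basis]
      exact S.μ_B_ρ0_monomial i d
    have := LinearMap.congr_fun key p
    simpa only [LinearMap.comp_apply, AlgHom.toLinearMap_apply, LinearMap.mulLeft_apply]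
      using this
  | zero => simp
  | add y z _ _ ihy ihz => simp only [map_add, LinearMap.add_apply, ihy, ihz, add_mul]
  | smul a y _ ihy =>
    simp only [map_smul, LinearMap.smul_apply, ihy, smul_mul_assoc]

lemma μ_B_Φ (t : TensorAlgebra A E) : ∀ p : V A n,
    S.μ (S.B (S.Φ (S.μ t) p)) = S.μ t * S.μ (S.B p) := by
  induction t using TensorAlgebra.induction with
  | algebraMap r =>
    intro p
    rw [AlgHom.commutes, AlgHom.commutes, Module.algebraMap_end_eq_smul_id]
    rw [LinearMap.smul_apply, LinearMap.id_apply, map_smul, map_smul, Algebra.smul_def]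
  | ι x => intro p; rw [S.Φ_ι]; exact S.μ_B_ρ x p
  | mul a b iha ihb =>
    intro p
    rw [map_mul, map_mul, Module.End.mul_apply, iha, ihb, mul_assoc]
  | add a b iha ihb =>
    intro p
    rw [map_add, map_add, LinearMap.add_apply, map_add, map_add, iha, ihb, add_mul]

def N : TensorAlgebra A E →ₗ[A] TensorAlgebra A E := S.B ∘ₗ S.π ∘ₗ S.μ.toLinearMap

lemma N_apply (t : TensorAlgebra A E) : S.N t = S.B (S.π (S.μ t)) := rfl

lemma B_one : S.B 1 = 1 := by
  have h1 : (1 : V A n) = monomial 0 (1:A) := by rw [monomial_zero', C_1]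
  rw [h1, B_monomial, sListF_zero, famTensor_nil]

lemma μ_N (t : TensorAlgebra A E) : S.μ (S.N t) = S.μ t := by
  have h := S.μ_B_Φ t 1
  rw [S.B_one, map_one S.μ, mul_one] at h
  rw [N_apply, π_apply]
  exact h

lemma N_famTensor {I : List (Fin n)} (h : I.Pairwise (· ≥ ·)) :
    S.N (famTensor (⇑S.b) I) = famTensor (⇑S.b) I := by
  rw [N_apply, S.π_μ_famTensor I h, B_monomial, sListF_mI h]

lemma B_mem (p : V A n) : S.B p ∈ stildeOf (⇑S.b) := by
  induction p using MvPolynomial.induction_on' with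
  | monomial d a =>
    have h : monomial d a = a • monomial d (1:A) := by simp [smul_monomial]
    rw [h, map_smul]
    exact Submodule.smul_mem _ a
      (Submodule.subset_span ⟨sListF d, sListF_sorted d, (S.B_monomial d)⟩)
  | add p q hp hq => rw [map_add]; exact add_mem hp hq

lemma N_mem (t : TensorAlgebra A E) : S.N t ∈ stildeOf (⇑S.b) := S.B_mem _

lemma N_fix {t : TensorAlgebra A E} (h : t ∈ stildeOf (⇑S.b)) : S.N t = t := by
  induction h using Submodule.span_induction with
  | mem z hz => obtain ⟨I, hI, rfl⟩ := hz; exact S.N_famTensor hI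
  | zero => simp
  | add y z _ _ ihy ihz => rw [map_add, ihy, ihz]
  | smul a y _ ihy => rw [map_smul, ihy]

lemma μ_inj {s t : TensorAlgebra A E} (hs : s ∈ stildeOf (⇑S.b)) (ht : t ∈ stildeOf (⇑S.b))
    (h : S.μ s = S.μ t) : s = t := by
  rw [← S.N_fix hs, ← S.N_fix ht, N_apply, N_apply, h]

lemma μ_surj (w : RingQuot S.r) : ∃ t ∈ stildeOf (⇑S.b), S.μ t = w := by
  obtain ⟨t, rfl⟩ := RingQuot.mkAlgHom_surjective A S.r w
  exact ⟨S.N t, S.N_mem t, S.μ_N t⟩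

lemma permInvariant : ∀ {J J' : List (Fin n)}, J ~ J' →
    (∀ a ∈ J, ∀ c ∈ J, S.κ (S.b a) (S.b c) = 0) →
    S.μ (famTensor (⇑S.b) J) = S.μ (famTensor (⇑S.b) J') := by
  intro J J' h
  induction h with
  | nil => intro _; rfl
  | cons x h ih =>
    intro hz
    rw [famTensor_cons, famTensor_cons, map_mul, map_mul,
      ih fun a ha c hc => hz a (List.mem_cons_of_mem _ ha) c (List.mem_cons_of_mem _ hc)]
  | swap x y l =>
    intro hz
    have e : ∀ u v : Fin n, S.μ (famTensor (⇑S.b) (u :: v :: l))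
        = S.μ (TensorAlgebra.ι A (S.b u) * TensorAlgebra.ι A (S.b v))
          * S.μ (famTensor (⇑S.b) l) := by
      intro u v
      rw [famTensor_cons, famTensor_cons, map_mul, map_mul, ← mul_assoc, ← map_mul]
    have h0 : S.κ (S.b y) (S.b x) = 0 := hz y (by simp) x (by simp)
    rw [e y x, e x y, S.rel_mu, h0, map_zero, add_zero]
  | trans h1 h2 ih1 ih2 =>
    intro hz
    rw [ih1 hz, ih2 fun a ha c hc => hz a (h1.mem_iff.mpr ha) c (h1.mem_iff.mpr hc)]

end Setup

lemma expand_block (e : Module.Basis (Fin n) A E) (e' : Fin n → E)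
    (M : Matrix (Fin n) (Fin n) A) (he' : ∀ i, e' i = ∑ j, M i j • e j)
    (Q : Fin n → Prop) (hQ : ∀ i j, Q i → M i j ≠ 0 → Q j) :
    ∀ I : List (Fin n), (∀ x ∈ I, Q x) →
      famTensor (A := A) e' I ∈
        Submodule.span A {t | ∃ J : List (Fin n), (∀ x ∈ J, Q x) ∧ t = famTensor (⇑e) J} := by
  intro I
  induction I with
  | nil =>
    intro _
    exact Submodule.subset_span ⟨[], by simp, rfl⟩
  | cons i I ih =>
    intro hQI
    rw [famTensor_cons]
    have hι : TensorAlgebra.ι A (e' i) = ∑ j, M i j • TensorAlgebra.ι A (e j) := by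
      rw [he' i, map_sum]
      exact Finset.sum_congr rfl fun j _ => map_smul _ _ _
    rw [hι, Finset.sum_mul]
    refine Submodule.sum_mem _ fun j _ => ?_
    rw [smul_mul_assoc]
    by_cases hMij : M i j = 0
    · rw [hMij, zero_smul]; exact Submodule.zero_mem _
    · refine Submodule.smul_mem _ _ ?_
      have hQj : Q j := hQ i j (hQI i (List.mem_cons_self)) hMij
      have hmem := ih fun x hx => hQI x (List.mem_cons_of_mem _ hx)
      generalize famTensor (A := A) e' I = u at hmem ⊢
      induction hmem using Submodule.span_induction with
      | mem t ht =>
        obtain ⟨J, hJ, rfl⟩ := ht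
        refine Submodule.subset_span ⟨j :: J, ?_, (famTensor_cons _ j J).symm⟩
        intro x hx
        rcases List.mem_cons.mp hx with rfl | hx'
        · exact hQj
        · exact hJ x hx'
      | zero => rw [mul_zero]; exact Submodule.zero_mem _
      | add u v _ _ ihu ihv => rw [mul_add]; exact Submodule.add_mem _ ihu ihv
      | smul a u _ ihu => rw [mul_smul_comm]; exact Submodule.smul_mem _ a ihu

end Stmt4Aux

open Stmt4Aux Stmt4Aux.Setup in
theorem stmt4 (A : Type*) [CommRing A] (E : Type*) [AddCommGroup E] [Module A E]
    (lam : A) (ω : E →ₗ[A] E →ₗ[A] A) (halt : ∀ x : E, ω x x = 0)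
    (ν ν' : ℕ) (e : Module.Basis (Fin (ν + ν')) A E)
    (hLiso : ∀ x ∈ Submodule.span A (Set.range fun i : Fin ν => e (Fin.castAdd ν' i)),
      ∀ y ∈ Submodule.span A (Set.range fun i : Fin ν => e (Fin.castAdd ν' i)),
        ω x y = 0)
    (hL'iso : ∀ x ∈ Submodule.span A (Set.range fun i : Fin ν' => e (Fin.natAdd ν i)),
      ∀ y ∈ Submodule.span A (Set.range fun i : Fin ν' => e (Fin.natAdd ν i)),
        ω x y = 0)
    (M : Matrix (Fin (ν + ν')) (Fin (ν + ν')) A) (hM : IsUnit M.det)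
    (hblock : ∀ i j : Fin (ν + ν'),
      (((i : ℕ) < ν ∧ ¬ (j : ℕ) < ν) ∨ (¬ (i : ℕ) < ν ∧ (j : ℕ) < ν)) → M i j = 0)
    (e' : Fin (ν + ν') → E) (he' : ∀ i, e' i = ∑ j, M i j • e j) :
    Function.Bijective
      ((RingQuot.mkAlgHom A (symRel A E)).toLinearMap.comp (stildeOf e').subtype) ∧
    Function.Bijective
      ((RingQuot.mkAlgHom A (weylRel A lam ω)).toLinearMap.comp (stildeOf e').subtype) ∧
    (∀ a ∈ stildeOf (⇑e), ∀ a' ∈ stildeOf e',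
      RingQuot.mkAlgHom A (symRel A E) a = RingQuot.mkAlgHom A (symRel A E) a' →
        RingQuot.mkAlgHom A (weylRel A lam ω) a =
          RingQuot.mkAlgHom A (weylRel A lam ω) a') := by
  classical
  -- the new basis as a `Basis`
  have hMt : IsUnit (Matrix.transpose M).det := by rwa [Matrix.det_transpose]
  let e'b : Module.Basis (Fin (ν + ν')) A E := e.map (Matrix.toLinearEquiv e (Matrix.transpose M) hMt)
  have he'b : ⇑e'b = e' := by
    funext i
    show (Matrix.toLinearEquiv e (Matrix.transpose M) hMt) (e i) = e' i
    rw [Matrix.toLinearEquiv_apply, Matrix.toLin_self, he' i]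
    exact Finset.sum_congr rfl fun j _ => by rw [Matrix.transpose_apply]
  have hst : stildeOf (A := A) e' = stildeOf (A := A) ⇑e'b := by rw [he'b]
  -- the four setups
  let Ssym' : Setup A E (ν + ν') :=
    { b := e'b, κ := 0, r := symRel A E
      hκ := fun x => rfl
      hr1 := by rintro a c ⟨x, y, rfl, rfl⟩; exact ⟨x, y, rfl, by simp⟩
      hr2 := fun x y => ⟨x, y, rfl, by simp⟩ }
  let Swey' : Setup A E (ν + ν') :=
    { b := e'b, κ := lam • ω, r := weylRel A lam ω
      hκ := fun x => by simp [halt x]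
      hr1 := by rintro a c ⟨x, y, rfl, rfl⟩; exact ⟨x, y, rfl, by simp⟩
      hr2 := fun x y => ⟨x, y, rfl, by simp⟩ }
  let Ssym : Setup A E (ν + ν') :=
    { b := e, κ := 0, r := symRel A E
      hκ := fun x => rfl
      hr1 := by rintro a c ⟨x, y, rfl, rfl⟩; exact ⟨x, y, rfl, by simp⟩
      hr2 := fun x y => ⟨x, y, rfl, by simp⟩ }
  let Swey : Setup A E (ν + ν') :=
    { b := e, κ := lam • ω, r := weylRel A lam ω
      hκ := fun x => by simp [halt x]
      hr1 := by rintro a c ⟨x, y, rfl, rfl⟩; exact ⟨x, y, rfl, by simp⟩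
      hr2 := fun x y => ⟨x, y, rfl, by simp⟩ }
  refine ⟨⟨?_, ?_⟩, ⟨?_, ?_⟩, ?_⟩
  · -- injectivity, symmetric case
    rintro ⟨s, hs⟩ ⟨t, ht⟩ h
    simp only [LinearMap.comp_apply, Submodule.coe_subtype, AlgHom.toLinearMap_apply] at h
    rw [hst] at hs ht
    exact Subtype.ext (Ssym'.μ_inj hs ht h)
  · -- surjectivity, symmetric case
    intro w
    obtain ⟨t, ht, hμ⟩ := Ssym'.μ_surj w
    rw [← hst] at ht
    exact ⟨⟨t, ht⟩, hμ⟩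
  · rintro ⟨s, hs⟩ ⟨t, ht⟩ h
    simp only [LinearMap.comp_apply, Submodule.coe_subtype, AlgHom.toLinearMap_apply] at h
    rw [hst] at hs ht
    exact Subtype.ext (Swey'.μ_inj hs ht h)
  · intro w
    obtain ⟨t, ht, hμ⟩ := Swey'.μ_surj w
    rw [← hst] at ht
    exact ⟨⟨t, ht⟩, hμ⟩
  · -- the two composite isomorphisms agree
    intro a ha a' ha' hSS
    -- block preservation
    have hQhi : ∀ i j : Fin (ν + ν'), ν ≤ i.val → M i j ≠ 0 → ν ≤ j.val := by
      intro i j hi hMij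
      by_contra hj
      exact hMij (hblock i j (Or.inr ⟨not_lt.mpr hi, not_le.mp hj⟩))
    have hQlo : ∀ i j : Fin (ν + ν'), i.val < ν → M i j ≠ 0 → j.val < ν := by
      intro i j hi hMij
      by_contra hj
      exact hMij (hblock i j (Or.inl ⟨hi, hj⟩))
    -- isotropy along blocks
    have hWlo : ∀ a c : Fin (ν + ν'), a.val < ν → c.val < ν → (lam • ω) (e a) (e c) = 0 := by
      intro a c ha' hc
      have hma : e a ∈ Submodule.span A (Set.range fun i : Fin ν => e (Fin.castAdd ν' i)) :=
        Submodule.subset_span ⟨⟨a.val, ha'⟩, congrArg e (Fin.ext rfl)⟩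
      have hmc : e c ∈ Submodule.span A (Set.range fun i : Fin ν => e (Fin.castAdd ν' i)) :=
        Submodule.subset_span ⟨⟨c.val, hc⟩, congrArg e (Fin.ext rfl)⟩
      have h0 := hLiso _ hma _ hmc
      simp [h0]
    have hWhi : ∀ a c : Fin (ν + ν'), ν ≤ a.val → ν ≤ c.val → (lam • ω) (e a) (e c) = 0 := by
      intro a c ha' hc
      have hma : e a ∈ Submodule.span A (Set.range fun i : Fin ν' => e (Fin.natAdd ν i)) :=
        Submodule.subset_span ⟨⟨a.val - ν, by omega⟩, congrArg e (Fin.ext (by simp; omega))⟩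
      have hmc : e c ∈ Submodule.span A (Set.range fun i : Fin ν' => e (Fin.natAdd ν i)) :=
        Submodule.subset_span ⟨⟨c.val - ν, by omega⟩, congrArg e (Fin.ext (by simp; omega))⟩
      have h0 := hL'iso _ hma _ hmc
      simp [h0]
    -- the core comparison for a block-sorted word
    have core : ∀ J1 J2 : List (Fin (ν + ν')), (∀ x ∈ J1, ν ≤ x.val) → (∀ x ∈ J2, x.val < ν) →
        RingQuot.mkAlgHom A (weylRel A lam ω) (Ssym.N (famTensor (⇑e) (J1 ++ J2)))
          = RingQuot.mkAlgHom A (weylRel A lam ω) (famTensor (⇑e) (J1 ++ J2)) := by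
      intro J1 J2 hJ1 hJ2
      have hp : List.Perm (J1 ++ J2) (sList (J1 : Multiset (Fin (ν + ν'))) ++ sList (J2 : Multiset (Fin (ν + ν')))) :=
        ((sList_perm J1).symm).append ((sList_perm J2).symm)
      have hsorted : (sList (J1 : Multiset (Fin (ν + ν'))) ++ sList (J2 : Multiset (Fin (ν + ν')))).Pairwise (· ≥ ·) := by
        rw [List.pairwise_append]
        refine ⟨sList_sorted _, sList_sorted _, fun x hx y hy => ?_⟩
        have h1 : ν ≤ x.val := hJ1 x ((sList_perm J1).mem_iff.mp hx)
        have h2 : y.val < ν := hJ2 y ((sList_perm J2).mem_iff.mp hy)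
        exact Fin.le_def.mpr (by omega)
      have hS : Ssym.μ (famTensor (⇑e) (J1 ++ J2))
          = Ssym.μ (famTensor (⇑e) (sList (J1 : Multiset (Fin (ν + ν'))) ++ sList (J2 : Multiset (Fin (ν + ν'))))) :=
        Ssym.permInvariant hp (by intro x _ y _; rfl)
      have hN : Ssym.N (famTensor (⇑e) (J1 ++ J2))
          = famTensor (⇑e) (sList (J1 : Multiset (Fin (ν + ν'))) ++ sList (J2 : Multiset (Fin (ν + ν')))) := by
        rw [Setup.N_apply, hS, ← Setup.N_apply, Ssym.N_famTensor hsorted]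
      have hW : Swey.μ (famTensor (⇑e) (J1 ++ J2))
          = Swey.μ (famTensor (⇑e) (sList (J1 : Multiset (Fin (ν + ν'))) ++ sList (J2 : Multiset (Fin (ν + ν'))))) := by
        rw [famTensor_append, famTensor_append, map_mul, map_mul,
          Swey.permInvariant (sList_perm J1).symm
            (fun x hx y hy => hWhi x y (hJ1 x hx) (hJ1 y hy)),
          Swey.permInvariant (sList_perm J2).symm
            (fun x hx y hy => hWlo x y (hJ2 x hx) (hJ2 y hy))]
      show Swey.μ _ = Swey.μ _
      rw [hN]
      exact hW.symm
    -- the key identity on all of S̃'(E)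
    have key : ∀ b' ∈ stildeOf e',
        RingQuot.mkAlgHom A (weylRel A lam ω) (Ssym.N b')
          = RingQuot.mkAlgHom A (weylRel A lam ω) b' := by
      intro b' hb'
      rw [hst] at hb'
      induction hb' using Submodule.span_induction with
      | zero => simp
      | add u v _ _ ihu ihv => rw [map_add, map_add, map_add, ihu, ihv]
      | smul c u _ ihu => rw [map_smul, map_smul, map_smul, ihu]
      | mem t ht =>
        obtain ⟨I, hI, rfl⟩ := ht
        rw [he'b]
        have hsplit : I.takeWhile (fun a : Fin (ν + ν') => decide (ν ≤ a.val))
            ++ I.dropWhile (fun a : Fin (ν + ν') => decide (ν ≤ a.val)) = I :=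
          List.takeWhile_append_dropWhile
        have htw : ∀ x ∈ I.takeWhile (fun a : Fin (ν + ν') => decide (ν ≤ a.val)), ν ≤ x.val :=
          fun x hx => by simpa using List.mem_takeWhile_imp hx
        have hdw := dropWhile_lt (ν := ν) I hI
        rw [← hsplit, famTensor_append]
        have m1 := expand_block e e' M he' (fun x => ν ≤ x.val) hQhi _ htw
        have m2 := expand_block e e' M he' (fun x => x.val < ν) hQlo _ hdw
        have H : ∀ x ∈ Submodule.span A
              {t | ∃ J : List (Fin (ν + ν')), (∀ y ∈ J, ν ≤ y.val) ∧ t = famTensor (⇑e) J},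
            ∀ z ∈ Submodule.span A
              {t | ∃ J : List (Fin (ν + ν')), (∀ y ∈ J, y.val < ν) ∧ t = famTensor (⇑e) J},
            RingQuot.mkAlgHom A (weylRel A lam ω) (Ssym.N (x * z))
              = RingQuot.mkAlgHom A (weylRel A lam ω) (x * z) := by
          intro x hx
          induction hx using Submodule.span_induction with
          | zero => intro z hz; simp
          | add u v _ _ ihu ihv =>
            intro z hz
            rw [add_mul, map_add, map_add, map_add, ihu z hz, ihv z hz]
          | smul c u _ ihu =>
            intro z hz
            rw [smul_mul_assoc, map_smul, map_smul, map_smul, ihu z hz]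
          | mem t ht =>
            intro z hz
            induction hz using Submodule.span_induction with
            | zero => simp
            | add u v _ _ ihu ihv => rw [mul_add, map_add, map_add, map_add, ihu, ihv]
            | smul c u _ ihu => rw [mul_smul_comm, map_smul, map_smul, map_smul, ihu]
            | mem s hs =>
              obtain ⟨J1, hJ1, rfl⟩ := ht
              obtain ⟨J2, hJ2, rfl⟩ := hs
              rw [← famTensor_append]
              exact core J1 J2 hJ1 hJ2
        exact H _ m1 _ m2
    have h2 : a = Ssym.N a' := by
      apply Ssym.μ_inj ha (Ssym.N_mem a')
      rw [Ssym.μ_N a']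
      exact hSS
    rw [h2]
    exact key a' ha'
end
end

section
/- Let I_L ⊆ W(E) be the left ideal generated by μ_W(L). Then I_L equals the A-span of {μ_W(e_I) : I ∈ Υ_1}; equivalently, I_L = μ_W(S̃_1(E)), where S̃_1(E) ⊆ S̃(E) is the A-span of {e_I : I ∈ Υ_1}. -/
section Aux

variable {A : Type*} [CommRing A] {E : Type*} [AddCommGroup E] [Module A E]
  (lam : A) (ω : E →ₗ[A] E →ₗ[A] A) {ν ν' : ℕ} (e : Module.Basis (Fin (ν + ν')) A E)

lemma eTensor_cons_s5 (j : Fin (ν + ν')) (I : List (Fin (ν + ν'))) :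
    eTensor e (j :: I) = TensorAlgebra.ι A (e j) * eTensor e I := by
  simp [eTensor]

lemma weyl_comm (x y : E) :
    RingQuot.mkAlgHom A (weylRel A lam ω) (TensorAlgebra.ι A x) *
      RingQuot.mkAlgHom A (weylRel A lam ω) (TensorAlgebra.ι A y) =
    RingQuot.mkAlgHom A (weylRel A lam ω) (TensorAlgebra.ι A y) *
      RingQuot.mkAlgHom A (weylRel A lam ω) (TensorAlgebra.ι A x) +
      algebraMap A _ (lam * ω x y) := by
  have h := RingQuot.mkAlgHom_rel A (s := weylRel A lam ω)
    (x := TensorAlgebra.ι A x * TensorAlgebra.ι A y) ⟨x, y, rfl, rfl⟩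
  simpa [map_mul, map_add, AlgHom.commutes] using h

lemma basis_mem_L (m : Fin (ν + ν')) (hm : (m : ℕ) < ν) :
    e m ∈ Submodule.span A (Set.range fun i : Fin ν => e (Fin.castAdd ν' i)) := by
  exact Submodule.subset_span ⟨⟨(m : ℕ), hm⟩, rfl⟩

lemma basis_mem_L' (m : Fin (ν + ν')) (hm : ν ≤ (m : ℕ)) :
    e m ∈ Submodule.span A (Set.range fun i : Fin ν' => e (Fin.natAdd ν i)) := by
  refine Submodule.subset_span ⟨⟨(m : ℕ) - ν, by omega⟩, ?_⟩
  have h : Fin.natAdd ν ⟨(m : ℕ) - ν, by omega⟩ = m := by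
    refine Fin.ext ?_
    simp only [Fin.coe_natAdd]
    omega
  exact congrArg e h

lemma omega_split
    (hLiso : ∀ x ∈ Submodule.span A (Set.range fun i : Fin ν => e (Fin.castAdd ν' i)),
      ∀ y ∈ Submodule.span A (Set.range fun i : Fin ν => e (Fin.castAdd ν' i)),
        ω x y = 0)
    (hL'iso : ∀ x ∈ Submodule.span A (Set.range fun i : Fin ν' => e (Fin.natAdd ν i)),
      ∀ y ∈ Submodule.span A (Set.range fun i : Fin ν' => e (Fin.natAdd ν i)),
        ω x y = 0)
    {j k : Fin (ν + ν')} (h : ω (e j) (e k) ≠ 0) :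
    ((j : ℕ) < ν ∧ ν ≤ (k : ℕ)) ∨ ((k : ℕ) < ν ∧ ν ≤ (j : ℕ)) := by
  rcases lt_or_ge (j : ℕ) ν with hj | hj <;> rcases lt_or_ge (k : ℕ) ν with hk | hk
  · exact absurd (hLiso _ (basis_mem_L e j hj) _ (basis_mem_L e k hk)) h
  · exact Or.inl ⟨hj, hk⟩
  · exact Or.inr ⟨hk, hj⟩
  · exact absurd (hL'iso _ (basis_mem_L' e j hj) _ (basis_mem_L' e k hk)) h

/-- Key insertion lemma: multiplying a sorted monomial on the left by a basis vector
lands in the span of sorted monomials whose entries come from `j :: I` and which keep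
a witness index `< ν` whenever `I` has one. -/
lemma insertA
    (hLiso : ∀ x ∈ Submodule.span A (Set.range fun i : Fin ν => e (Fin.castAdd ν' i)),
      ∀ y ∈ Submodule.span A (Set.range fun i : Fin ν => e (Fin.castAdd ν' i)),
        ω x y = 0)
    (hL'iso : ∀ x ∈ Submodule.span A (Set.range fun i : Fin ν' => e (Fin.natAdd ν i)),
      ∀ y ∈ Submodule.span A (Set.range fun i : Fin ν' => e (Fin.natAdd ν i)),
        ω x y = 0)
    (j : Fin (ν + ν')) :
    ∀ I : List (Fin (ν + ν')), List.Pairwise (· ≥ ·) I →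
      RingQuot.mkAlgHom A (weylRel A lam ω) (TensorAlgebra.ι A (e j)) *
        RingQuot.mkAlgHom A (weylRel A lam ω) (eTensor e I) ∈
      Submodule.span A
        {w | ∃ K : List (Fin (ν + ν')), List.Pairwise (· ≥ ·) K ∧
          (∀ m ∈ K, m = j ∨ m ∈ I) ∧
          ((∃ i ∈ I, (i : ℕ) < ν) → ∃ i ∈ K, (i : ℕ) < ν) ∧
          w = RingQuot.mkAlgHom A (weylRel A lam ω) (eTensor e K)} := by
  intro I
  induction I with
  | nil =>
    intro _
    refine Submodule.subset_span ⟨[j], ?_, ?_, ?_, ?_⟩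
    · simp
    · simp
    · simp
    · rw [eTensor_cons_s5, map_mul]
  | cons k I' ih =>
    intro hI
    rcases le_or_gt k j with hkj | hjk
    · refine Submodule.subset_span ⟨j :: k :: I', ?_, ?_, ?_, ?_⟩
      · refine List.pairwise_cons.2 ⟨?_, hI⟩
        intro b hb
        rcases List.mem_cons.1 hb with rfl | hb
        · exact hkj
        · exact le_trans (List.rel_of_pairwise_cons hI hb) hkj
      · intro m hm
        rcases List.mem_cons.1 hm with rfl | hm
        · exact Or.inl rfl
        · exact Or.inr hm
      · rintro ⟨i, hi, hiν⟩
        exact ⟨i, List.mem_cons_of_mem _ hi, hiν⟩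
      · simp [eTensor_cons_s5, map_mul, mul_assoc]
    · -- j < k : commute
      rw [eTensor_cons_s5, map_mul, ← mul_assoc,
        weyl_comm lam ω (e j) (e k), add_mul, mul_assoc, ← Algebra.smul_def]
      refine Submodule.add_mem _ ?_ ?_
      · -- main term : μ(e k) * (μ(e j) * μ(e I'))
        have step : ∀ v ∈ Submodule.span A
            {w | ∃ K : List (Fin (ν + ν')), List.Pairwise (· ≥ ·) K ∧
              (∀ m ∈ K, m = j ∨ m ∈ I') ∧
              ((∃ i ∈ I', (i : ℕ) < ν) → ∃ i ∈ K, (i : ℕ) < ν) ∧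
              w = RingQuot.mkAlgHom A (weylRel A lam ω) (eTensor e K)},
            RingQuot.mkAlgHom A (weylRel A lam ω) (TensorAlgebra.ι A (e k)) * v ∈
            Submodule.span A
              {w | ∃ K : List (Fin (ν + ν')), List.Pairwise (· ≥ ·) K ∧
                (∀ m ∈ K, m = j ∨ m ∈ k :: I') ∧
                ((∃ i ∈ k :: I', (i : ℕ) < ν) → ∃ i ∈ K, (i : ℕ) < ν) ∧
                w = RingQuot.mkAlgHom A (weylRel A lam ω) (eTensor e K)} := by
          intro v hv
          induction hv using Submodule.span_induction with
          | mem w hw =>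
            obtain ⟨K', hK's, hK'sub, hK'wit, rfl⟩ := hw
            refine Submodule.subset_span ⟨k :: K', ?_, ?_, ?_, ?_⟩
            · refine List.pairwise_cons.2 ⟨?_, hK's⟩
              intro b hb
              rcases hK'sub b hb with rfl | hb
              · exact hjk.le
              · exact List.rel_of_pairwise_cons hI hb
            · intro m hm
              rcases List.mem_cons.1 hm with rfl | hm
              · exact Or.inr (List.mem_cons_self)
              · rcases hK'sub m hm with rfl | hm
                · exact Or.inl rfl
                · exact Or.inr (List.mem_cons_of_mem _ hm)
            · rintro ⟨i, hi, hiν⟩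
              rcases List.mem_cons.1 hi with rfl | hi
              · exact ⟨i, List.mem_cons_self, hiν⟩
              · obtain ⟨i', hi', hi'ν⟩ := hK'wit ⟨i, hi, hiν⟩
                exact ⟨i', List.mem_cons_of_mem _ hi', hi'ν⟩
            · rw [eTensor_cons_s5, map_mul]
          | zero => simpa using Submodule.zero_mem _
          | add x y _ _ hx hy =>
            rw [mul_add]; exact Submodule.add_mem _ hx hy
          | smul a x _ hx =>
            rw [mul_smul_comm]; exact Submodule.smul_mem _ _ hx
        exact step _ (ih hI.of_cons)
      · -- error term
        by_cases hw : ω (e j) (e k) = 0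
        · simp [hw]
        · rcases omega_split ω e hLiso hL'iso hw with ⟨hjν, hkν⟩ | ⟨hkν, hjν⟩
          · have hmem : RingQuot.mkAlgHom A (weylRel A lam ω) (eTensor e I') ∈
                {w | ∃ K : List (Fin (ν + ν')), List.Pairwise (· ≥ ·) K ∧
                  (∀ m ∈ K, m = j ∨ m ∈ k :: I') ∧
                  ((∃ i ∈ k :: I', (i : ℕ) < ν) → ∃ i ∈ K, (i : ℕ) < ν) ∧
                  w = RingQuot.mkAlgHom A (weylRel A lam ω) (eTensor e K)} := by
              refine ⟨I', hI.of_cons, ?_, ?_, rfl⟩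
              · intro m hm; exact Or.inr (List.mem_cons_of_mem _ hm)
              · rintro ⟨i, hi, hiν⟩
                rcases List.mem_cons.1 hi with rfl | hi
                · omega
                · exact ⟨i, hi, hiν⟩
            exact Submodule.smul_mem _ _ (Submodule.subset_span hmem)
          · have := Fin.lt_def.1 hjk; omega

end Aux

/-- The left ideal `I_L ⊆ W(E)` generated by `μ_W(L)` equals the
`A`-span of `{μ_W(e_I) : I ∈ Υ₁}`, i.e. `I_L = μ_W(S̃₁(E))` where `S̃₁(E)` is the
`A`-span of the `e_I` with `I` nonincreasing of α-length at least 1. -/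
theorem stmt5 (A : Type*) [CommRing A] (E : Type*) [AddCommGroup E] [Module A E]
    (lam : A) (ω : E →ₗ[A] E →ₗ[A] A) (halt : ∀ x : E, ω x x = 0)
    (ν ν' : ℕ) (e : Module.Basis (Fin (ν + ν')) A E)
    (hLiso : ∀ x ∈ Submodule.span A (Set.range fun i : Fin ν => e (Fin.castAdd ν' i)),
      ∀ y ∈ Submodule.span A (Set.range fun i : Fin ν => e (Fin.castAdd ν' i)),
        ω x y = 0)
    (hL'iso : ∀ x ∈ Submodule.span A (Set.range fun i : Fin ν' => e (Fin.natAdd ν i)),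
      ∀ y ∈ Submodule.span A (Set.range fun i : Fin ν' => e (Fin.natAdd ν i)),
        ω x y = 0) :
    (Ideal.span
        (⇑(RingQuot.mkAlgHom A (weylRel A lam ω)) ''
          (⇑(TensorAlgebra.ι A) ''
            (Submodule.span A (Set.range fun i : Fin ν => e (Fin.castAdd ν' i)) :
              Set E)))).restrictScalars A =
      Submodule.span A
        {w | ∃ I : List (Fin (ν + ν')), List.Pairwise (· ≥ ·) I ∧
          (∃ i ∈ I, (i : ℕ) < ν) ∧
          w = RingQuot.mkAlgHom A (weylRel A lam ω) (eTensor e I)} ∧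
    (Ideal.span
        (⇑(RingQuot.mkAlgHom A (weylRel A lam ω)) ''
          (⇑(TensorAlgebra.ι A) ''
            (Submodule.span A (Set.range fun i : Fin ν => e (Fin.castAdd ν' i)) :
              Set E)))).restrictScalars A =
      Submodule.map (RingQuot.mkAlgHom A (weylRel A lam ω)).toLinearMap
        (Submodule.span A
          {t | ∃ I : List (Fin (ν + ν')), List.Pairwise (· ≥ ·) I ∧
            (∃ i ∈ I, (i : ℕ) < ν) ∧ t = eTensor e I}) := by
  set μ := RingQuot.mkAlgHom A (weylRel A lam ω) with hμ
  set S1 : Set (RingQuot (weylRel A lam ω)) :=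
    {w | ∃ I : List (Fin (ν + ν')), List.Pairwise (· ≥ ·) I ∧
      (∃ i ∈ I, (i : ℕ) < ν) ∧ w = μ (eTensor e I)} with hS1
  -- closure of span S1 under left multiplication by basis vectors
  have key : ∀ (j : Fin (ν + ν')) {v}, v ∈ Submodule.span A S1 →
      μ (TensorAlgebra.ι A (e j)) * v ∈ Submodule.span A S1 := by
    intro j v hv
    induction hv using Submodule.span_induction with
    | mem w hw =>
      obtain ⟨I, hIs, hIwit, rfl⟩ := hw
      refine Submodule.span_mono ?_ (insertA lam ω e hLiso hL'iso j I hIs)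
      rintro w ⟨K, hKs, _, hKwit, rfl⟩
      exact ⟨K, hKs, hKwit hIwit, rfl⟩
    | zero => simpa using Submodule.zero_mem _
    | add x y _ _ hx hy => rw [mul_add]; exact Submodule.add_mem _ hx hy
    | smul a x _ hx => rw [mul_smul_comm]; exact Submodule.smul_mem _ _ hx
  -- closure under left multiplication by ι of any vector
  have keyE : ∀ (x : E) {v}, v ∈ Submodule.span A S1 →
      μ (TensorAlgebra.ι A x) * v ∈ Submodule.span A S1 := by
    intro x v hv
    have hx : x ∈ Submodule.span A (Set.range e) := by
      rw [Module.Basis.span_eq]; exact Submodule.mem_top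
    induction hx using Submodule.span_induction with
    | mem y hy => obtain ⟨i, rfl⟩ := hy; exact key i hv
    | zero => simpa using Submodule.zero_mem _
    | add y z _ _ hy hz =>
      rw [map_add, map_add, add_mul]; exact Submodule.add_mem _ hy hz
    | smul a y _ hy =>
      rw [map_smul, map_smul, smul_mul_assoc]; exact Submodule.smul_mem _ _ hy
  -- closure under left multiplication by anything
  have keyW : ∀ (w : RingQuot (weylRel A lam ω)) {v}, v ∈ Submodule.span A S1 →
      w * v ∈ Submodule.span A S1 := by
    have main : ∀ t : TensorAlgebra A E, ∀ v ∈ Submodule.span A S1,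
        μ t * v ∈ Submodule.span A S1 := by
      intro t
      induction t using TensorAlgebra.induction with
      | algebraMap r =>
        intro v hv
        rw [AlgHom.commutes, ← Algebra.smul_def]
        exact Submodule.smul_mem _ _ hv
      | ι x => intro v hv; exact keyE x hv
      | mul t₁ t₂ h₁ h₂ =>
        intro v hv
        rw [map_mul, mul_assoc]
        exact h₁ _ (h₂ v hv)
      | add t₁ t₂ h₁ h₂ =>
        intro v hv
        rw [map_add, add_mul]
        exact Submodule.add_mem _ (h₁ v hv) (h₂ v hv)
    intro w v hv
    obtain ⟨t, rfl⟩ := RingQuot.mkAlgHom_surjective A (weylRel A lam ω) w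
    exact main t v hv
  -- sorted monomials with a witness lie in the ideal
  have memIdeal : ∀ I : List (Fin (ν + ν')), List.Pairwise (· ≥ ·) I →
      (∃ i ∈ I, (i : ℕ) < ν) →
      μ (eTensor e I) ∈ Ideal.span
        (⇑μ '' (⇑(TensorAlgebra.ι A) ''
          (Submodule.span A (Set.range fun i : Fin ν => e (Fin.castAdd ν' i)) : Set E))) := by
    intro I
    induction I with
    | nil => intro _ h; simp at h
    | cons a I' ih =>
      intro hI hwit
      rcases eq_or_ne I' [] with rfl | hne
      · obtain ⟨i, hi, hiν⟩ := hwit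
        simp only [List.mem_singleton] at hi
        subst hi
        have h1 : eTensor e [i] = TensorAlgebra.ι A (e i) := by simp [eTensor]
        rw [h1]
        exact Ideal.subset_span ⟨TensorAlgebra.ι A (e i),
          ⟨e i, basis_mem_L e i hiν, rfl⟩, rfl⟩
      · have hwit' : ∃ i ∈ I', (i : ℕ) < ν := by
          obtain ⟨i, hi, hiν⟩ := hwit
          rcases List.mem_cons.1 hi with rfl | hi
          · obtain ⟨b, hb⟩ := List.exists_mem_of_ne_nil I' hne
            have hba : b ≤ i := List.rel_of_pairwise_cons hI hb
            exact ⟨b, hb, lt_of_le_of_lt (Fin.le_def.1 hba) hiν⟩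
          · exact ⟨i, hi, hiν⟩
        rw [eTensor_cons_s5, map_mul]
        exact Ideal.mul_mem_left _ _ (ih hI.of_cons hwit')
  have h1 : (Ideal.span
      (⇑μ '' (⇑(TensorAlgebra.ι A) ''
        (Submodule.span A (Set.range fun i : Fin ν => e (Fin.castAdd ν' i)) :
          Set E)))).restrictScalars A = Submodule.span A S1 := by
    apply le_antisymm
    · intro z hz
      rw [Submodule.restrictScalars_mem] at hz
      induction hz using Submodule.span_induction with
      | mem w hw =>
        obtain ⟨t, ⟨x, hx, rfl⟩, rfl⟩ := hw
        induction hx using Submodule.span_induction with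
        | mem y hy =>
          obtain ⟨i, rfl⟩ := hy
          refine Submodule.subset_span ⟨[Fin.castAdd ν' i], ?_, ?_, ?_⟩
          · simp
          · exact ⟨Fin.castAdd ν' i, List.mem_singleton_self _, by simp⟩
          · simp [eTensor]
        | zero => simpa using Submodule.zero_mem _
        | add y z _ _ hy hz =>
          rw [map_add, map_add]; exact Submodule.add_mem _ hy hz
        | smul a y _ hy =>
          rw [map_smul, map_smul]; exact Submodule.smul_mem _ _ hy
      | zero => exact Submodule.zero_mem _
      | add x y _ _ hx hy => exact Submodule.add_mem _ hx hy
      | smul a x _ hx => rw [smul_eq_mul]; exact keyW a hx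
    · rw [Submodule.span_le]
      rintro w ⟨I, hIs, hIwit, rfl⟩
      exact memIdeal I hIs hIwit
  refine ⟨h1, ?_⟩
  have himg : ⇑μ.toLinearMap ''
      {t | ∃ I : List (Fin (ν + ν')), List.Pairwise (· ≥ ·) I ∧
        (∃ i ∈ I, (i : ℕ) < ν) ∧ t = eTensor e I} = S1 := by
    ext w
    constructor
    · rintro ⟨t, ⟨I, hs, hwit, rfl⟩, rfl⟩
      exact ⟨I, hs, hwit, rfl⟩
    · rintro ⟨I, hs, hwit, rfl⟩
      exact ⟨eTensor e I, ⟨I, hs, hwit, rfl⟩, rfl⟩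
  rw [Submodule.map_span, himg]
  exact h1
end
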